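/- arXiv:2207.13039 — 8 statements merged into one kernel-verified Lean document; each statement's English description precedes it below -/
import Mathlib

section
/- Let $A=[a_{i,j}]_{1\le i,j\le n}$ be a matrix over a commutative ring such that $a_{i,j}=0$ whenever $i+j$ is an even number greater than two. If $n=2m$ for some positive integer $m$, then the permanent of $A$ factors as $\mathrm{per}(A)=\mathrm{per}[a_{2i,2j-1}]_{1\le i,j\le m}\cdot\mathrm{per}[a_{2i-1,2j}]_{1\le i,j\le m}$. -/
open Finset Equiv Equiv.Perm Matrix

lemma aux_key {α : Type*} [Finite α] (σ : Equiv.Perm (α ⊕ α)) (a : α)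
    (h : σ (Sum.inr a) = Sum.inr a) : ∃ i i', σ (Sum.inl i) = Sum.inl i' := by
  by_contra hc
  push_neg at hc
  have hf : ∀ i, ∃ j, σ (Sum.inl i) = Sum.inr j := by
    intro i
    cases hx : σ (Sum.inl i) with
    | inl i' => exact absurd hx (hc i i')
    | inr j => exact ⟨j, rfl⟩
  choose f hfspec using hf
  have hinj : Function.Injective f := by
    intro i j hij
    have : σ (Sum.inl i) = σ (Sum.inl j) := by rw [hfspec, hfspec, hij]
    simpa using σ.injective this
  obtain ⟨i, hi⟩ := (Finite.injective_iff_surjective.mp hinj) a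
  have : σ (Sum.inl i) = σ (Sum.inr a) := by rw [hfspec, hi, h]
  simpa using σ.injective this

lemma permanent_fromBlocks_zero₂₁ {R : Type*} [CommRing R] {m n : Type*}
    [DecidableEq m] [Fintype m] [DecidableEq n] [Fintype n]
    (A : Matrix m m R) (B : Matrix m n R) (D : Matrix n n R) :
    (Matrix.fromBlocks A B 0 D).permanent = A.permanent * D.permanent := by
  classical
  simp_rw [Matrix.permanent]
  convert Eq.symm <|
    sum_subset (M := R) (subset_univ ((sumCongrHom m n).range : Set (Perm (m ⊕ n))).toFinset) ?_
  · simp_rw [sum_mul_sum, ← sum_product', univ_product_univ]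
    refine sum_nbij (fun σ ↦ σ.fst.sumCongr σ.snd) ?_ ?_ ?_ ?_
    · intro σ₁₂ _
      erw [Set.mem_toFinset, MonoidHom.mem_range]
      use σ₁₂
      simp only [sumCongrHom_apply]
    · intro σ₁ _ σ₂ _
      dsimp only
      intro h
      have h2 : ∀ x, Perm.sumCongr σ₁.fst σ₁.snd x = Perm.sumCongr σ₂.fst σ₂.snd x :=
        DFunLike.congr_fun h
      simp only [Sum.map_inr, Sum.map_inl, Perm.sumCongr_apply, Sum.forall, Sum.inl.injEq,
        Sum.inr.injEq] at h2
      ext x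
      · exact h2.left x
      · exact h2.right x
    · intro σ hσ
      erw [Set.mem_toFinset, MonoidHom.mem_range] at hσ
      obtain ⟨σ₁₂, hσ₁₂⟩ := hσ
      use σ₁₂
      rw [← hσ₁₂]
      simp
    · simp only [forall_prop_of_true, Prod.forall, mem_univ]
      intro σ₁ σ₂
      rw [Fintype.prod_sum_type]
      simp_rw [Equiv.sumCongr_apply, Sum.map_inr, Sum.map_inl, fromBlocks_apply₁₁,
        fromBlocks_apply₂₂]
  · rintro σ - hσn
    have h1 : ¬∀ x, ∃ y, Sum.inl y = σ (Sum.inl x) := by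
      rw [Set.mem_toFinset] at hσn
      simpa only [Set.MapsTo, Set.mem_range, forall_exists_index, forall_apply_eq_imp_iff] using
        mt mem_sumCongrHom_range_of_perm_mapsTo_inl hσn
    obtain ⟨a, ha⟩ := not_forall.mp h1
    cases' hx : σ (Sum.inl a) with a2 b
    · have hn := (not_exists.mp ha) a2
      exact absurd hx.symm hn
    · rw [Finset.prod_eq_zero (Finset.mem_univ (Sum.inl a))]
      rw [hx, fromBlocks_apply₂₁, Matrix.zero_apply]

lemma permanent_fromBlocks_offdiag {R : Type*} [CommRing R] {α : Type*} [DecidableEq α]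
    [Fintype α] (B C : Matrix α α R) :
    (Matrix.fromBlocks 0 B C 0).permanent = B.permanent * C.permanent := by
  have h : Matrix.fromBlocks (0 : Matrix α α R) B C 0
      = (Matrix.fromBlocks C 0 0 B).submatrix (Equiv.sumComm α α) id := by
    ext i j
    rcases i with i | i <;> rcases j with j | j <;> simp
  rw [h, Matrix.permanent_permute_cols (Equiv.sumComm α α), permanent_fromBlocks_zero₂₁, mul_comm]

lemma per_blocks_congr {R : Type*} [CommRing R] {α : Type*} [DecidableEq α] [Fintype α]
    (B C D : Matrix α α R) (a : α) (hD : ∀ i j, ¬(i = a ∧ j = a) → D i j = 0) :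
    (Matrix.fromBlocks 0 B C D).permanent = (Matrix.fromBlocks 0 B C 0).permanent := by
  simp_rw [Matrix.permanent]
  refine Finset.sum_congr rfl fun σ _ => ?_
  by_cases h : σ (Sum.inr a) = Sum.inr a
  · obtain ⟨i, i', hii⟩ := aux_key σ a h
    rw [Finset.prod_eq_zero (Finset.mem_univ (Sum.inl i)),
      Finset.prod_eq_zero (Finset.mem_univ (Sum.inl i))]
    · rw [hii]; simp
    · rw [hii]; simp
  · refine Finset.prod_congr rfl fun x _ => ?_
    rcases x with j | j
    · rcases hx : σ (Sum.inl j) with k | k <;> simp [hx]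
    · rcases hx : σ (Sum.inr j) with k | k
      · simp [hx]
      · simp only [Matrix.fromBlocks_apply₂₂, Matrix.zero_apply]
        apply hD
        rintro ⟨rfl, rfl⟩
        exact h hx

lemma permanent_submatrix_equiv {R : Type*} [CommRing R] {α β : Type*} [DecidableEq α]
    [Fintype α] [DecidableEq β] [Fintype β] (e : α ≃ β) (M : Matrix β β R) :
    (M.submatrix e e).permanent = M.permanent := by
  simp_rw [Matrix.permanent]
  refine Fintype.sum_equiv e.permCongr _ _ fun σ => ?_
  refine Fintype.prod_equiv e _ _ fun i => ?_
  simp [Matrix.submatrix_apply, Equiv.permCongr_apply]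

/-- If `A = [a_{i,j}]_{1 ≤ i,j ≤ n}` (rows/columns indexed `1..n`, here realized
as `Fin n` with `i` standing for the `(i+1)`-st row/column) is a matrix over a commutative ring
with `a_{i,j} = 0` whenever `i + j` is an even number greater than two, and `n = 2m` with
`m ≥ 1`, then `per(A) = per[a_{2i,2j-1}]_{1≤i,j≤m} * per[a_{2i-1,2j}]_{1≤i,j≤m}`. -/
theorem stmt0 {R : Type*} [CommRing R] (m : ℕ) (hm : 0 < m)
    (A : Matrix (Fin (2 * m)) (Fin (2 * m)) R)
    (hA : ∀ i j : Fin (2 * m), Even (((i : ℕ) + 1) + ((j : ℕ) + 1)) →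
      ((i : ℕ) + 1) + ((j : ℕ) + 1) > 2 → A i j = 0) :
    A.permanent =
      (Matrix.of fun i j : Fin m =>
          A ⟨2 * (i : ℕ) + 1, by have := i.isLt; omega⟩
            ⟨2 * (j : ℕ), by have := j.isLt; omega⟩).permanent *
      (Matrix.of fun i j : Fin m =>
          A ⟨2 * (i : ℕ), by have := i.isLt; omega⟩
            ⟨2 * (j : ℕ) + 1, by have := j.isLt; omega⟩).permanent := by
  classical
  set B : Matrix (Fin m) (Fin m) R := Matrix.of fun i j : Fin m =>
      A ⟨2 * (i : ℕ) + 1, by have := i.isLt; omega⟩ ⟨2 * (j : ℕ), by have := j.isLt; omega⟩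
    with hB
  set C : Matrix (Fin m) (Fin m) R := Matrix.of fun i j : Fin m =>
      A ⟨2 * (i : ℕ), by have := i.isLt; omega⟩ ⟨2 * (j : ℕ) + 1, by have := j.isLt; omega⟩
    with hC
  set D : Matrix (Fin m) (Fin m) R := Matrix.of fun i j : Fin m =>
      A ⟨2 * (i : ℕ), by have := i.isLt; omega⟩ ⟨2 * (j : ℕ), by have := j.isLt; omega⟩
    with hD
  have hbij : Function.Bijective (Sum.elim
      (fun i : Fin m => (⟨2 * (i : ℕ) + 1, by have := i.isLt; omega⟩ : Fin (2 * m)))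
      (fun i : Fin m => (⟨2 * (i : ℕ), by have := i.isLt; omega⟩ : Fin (2 * m)))) := by
    constructor
    · rintro (i | i) (j | j) h <;>
        simp only [Sum.elim_inl, Sum.elim_inr, Fin.mk.injEq] at h
      · exact congrArg Sum.inl (Fin.ext (by omega))
      · omega
      · omega
      · exact congrArg Sum.inr (Fin.ext (by omega))
    · intro k
      by_cases h : (k : ℕ) % 2 = 1
      · exact ⟨Sum.inl ⟨(k : ℕ) / 2, by have := k.isLt; omega⟩, Fin.ext (by simp; omega)⟩
      · exact ⟨Sum.inr ⟨(k : ℕ) / 2, by have := k.isLt; omega⟩, Fin.ext (by simp; omega)⟩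
  let e : Fin m ⊕ Fin m ≃ Fin (2 * m) := Equiv.ofBijective _ hbij
  have he1 : ∀ i : Fin m, e (Sum.inl i) =
      (⟨2 * (i : ℕ) + 1, by have := i.isLt; omega⟩ : Fin (2 * m)) := fun i => rfl
  have he2 : ∀ i : Fin m, e (Sum.inr i) =
      (⟨2 * (i : ℕ), by have := i.isLt; omega⟩ : Fin (2 * m)) := fun i => rfl
  have hAe : A.submatrix e e = Matrix.fromBlocks 0 B C D := by
    ext x y
    rcases x with i | i <;> rcases y with j | j <;>
      simp only [Matrix.submatrix_apply, he1, he2, Matrix.fromBlocks_apply₁₁,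
        Matrix.fromBlocks_apply₁₂, Matrix.fromBlocks_apply₂₁, Matrix.fromBlocks_apply₂₂,
        Matrix.zero_apply, Matrix.of_apply, hB, hC, hD]
    exact hA _ _ ⟨(i : ℕ) + (j : ℕ) + 2, by simp; omega⟩ (by simp; omega)
  have hDz : ∀ i j : Fin m, ¬(i = ⟨0, hm⟩ ∧ j = ⟨0, hm⟩) → D i j = 0 := by
    intro i j hij
    have hij' : 0 < (i : ℕ) + (j : ℕ) := by
      rcases Nat.eq_zero_or_pos ((i : ℕ) + (j : ℕ)) with h0 | h0
      · exact absurd ⟨Fin.ext (by simp; omega), Fin.ext (by simp; omega)⟩ hij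
      · exact h0
    exact hA _ _ ⟨(i : ℕ) + (j : ℕ) + 1, by simp; omega⟩ (by simp; omega)
  calc A.permanent = (A.submatrix e e).permanent := (permanent_submatrix_equiv e A).symm
    _ = (Matrix.fromBlocks 0 B C D).permanent := by rw [hAe]
    _ = (Matrix.fromBlocks 0 B C 0).permanent := per_blocks_congr B C D ⟨0, hm⟩ hDz
    _ = B.permanent * C.permanent := permanent_fromBlocks_offdiag B C
end

section
/- Let $A=[a_{i,j}]_{1\le i,j\le n}$ be a matrix over a commutative ring such that $a_{i,j}=0$ whenever $i+j$ is an even number greater than two. If $n=2m+1$ for some positive integer $m$, then $\mathrm{per}(A)=a_{1,1}\cdot\mathrm{per}[a_{2i,2j+1}]_{1\le i,j\le m}\cdot\mathrm{per}[a_{2i+1,2j}]_{1\le i,j\le m}$. -/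
open Equiv Finset

namespace Stmt2Aux

variable (m : ℕ)

lemma bnd1 (i : Fin m) : 2 * (i : ℕ) + 1 < 2 * m + 1 := by have := i.isLt; omega

lemma bnd2 (i : Fin m) : 2 * (i : ℕ) + 2 < 2 * m + 1 := by have := i.isLt; omega

def cf : Fin 1 ⊕ (Fin m ⊕ Fin m) → Fin (2 * m + 1) :=
  Sum.elim (fun _ => ⟨0, by omega⟩)
    (Sum.elim (fun i => ⟨2 * (i : ℕ) + 1, bnd1 m i⟩)
      (fun i => ⟨2 * (i : ℕ) + 2, bnd2 m i⟩))

lemma cf_injective : Function.Injective (cf m) := by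
  rintro (a | (i | i)) (b | (j | j)) h <;>
    simp only [cf, Sum.elim_inl, Sum.elim_inr, Fin.mk.injEq] at h
  · exact congrArg Sum.inl (Subsingleton.elim a b)
  · omega
  · omega
  · omega
  · exact congrArg _ (congrArg _ (Fin.ext (by omega)))
  · omega
  · omega
  · omega
  · exact congrArg _ (congrArg _ (Fin.ext (by omega)))

noncomputable def c : Fin 1 ⊕ (Fin m ⊕ Fin m) ≃ Fin (2 * m + 1) :=
  Equiv.ofBijective (cf m)
    ((Fintype.bijective_iff_injective_and_card _).mpr
      ⟨cf_injective m, by simp only [Fintype.card_sum, Fintype.card_fin]; omega⟩)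

lemma c_inl (a : Fin 1) : c m (Sum.inl a) = ⟨0, by omega⟩ := rfl

lemma c_inr_inl (i : Fin m) :
    c m (Sum.inr (Sum.inl i)) = ⟨2 * (i : ℕ) + 1, bnd1 m i⟩ := rfl

lemma c_inr_inr (i : Fin m) :
    c m (Sum.inr (Sum.inr i)) = ⟨2 * (i : ℕ) + 2, bnd2 m i⟩ := rfl

lemma c_inl_val (a : Fin 1) : (c m (Sum.inl a) : ℕ) = 0 := rfl

lemma c_inr_inl_val (i : Fin m) : (c m (Sum.inr (Sum.inl i)) : ℕ) = 2 * (i : ℕ) + 1 := rfl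

lemma c_inr_inr_val (i : Fin m) : (c m (Sum.inr (Sum.inr i)) : ℕ) = 2 * (i : ℕ) + 2 := rfl

noncomputable def gperm (τ ρ : Perm (Fin m)) : Perm (Fin (2 * m + 1)) :=
  (c m).permCongr
    ((Equiv.refl (Fin 1)).sumCongr ((ρ.sumCongr τ).trans (Equiv.sumComm (Fin m) (Fin m))))

lemma gperm_inl (τ ρ : Perm (Fin m)) (a : Fin 1) :
    gperm m τ ρ (c m (Sum.inl a)) = c m (Sum.inl a) := by
  simp [gperm]

lemma gperm_inr_inl (τ ρ : Perm (Fin m)) (i : Fin m) :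
    gperm m τ ρ (c m (Sum.inr (Sum.inl i))) = c m (Sum.inr (Sum.inr (ρ i))) := by
  simp [gperm]

lemma gperm_inr_inr (τ ρ : Perm (Fin m)) (i : Fin m) :
    gperm m τ ρ (c m (Sum.inr (Sum.inr i))) = c m (Sum.inr (Sum.inl (τ i))) := by
  simp [gperm]

lemma gperm_inj {τ ρ τ' ρ' : Perm (Fin m)} (h : gperm m τ ρ = gperm m τ' ρ') :
    τ = τ' ∧ ρ = ρ' := by
  constructor
  · refine Equiv.ext fun i => ?_
    have h1 := DFunLike.congr_fun h (c m (Sum.inr (Sum.inr i)))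
    rw [gperm_inr_inr, gperm_inr_inr] at h1
    have := (c m).injective h1
    simpa using this
  · refine Equiv.ext fun i => ?_
    have h1 := DFunLike.congr_fun h (c m (Sum.inr (Sum.inl i)))
    rw [gperm_inr_inl, gperm_inr_inl] at h1
    have := (c m).injective h1
    simpa using this

lemma prod_gperm {R : Type*} [CommRing R] (A : Matrix (Fin (2 * m + 1)) (Fin (2 * m + 1)) R)
    (τ ρ : Perm (Fin m)) :
    ∏ k, A (gperm m τ ρ k) k =
      A ⟨0, by omega⟩ ⟨0, by omega⟩ *
        ((∏ i : Fin m, A ⟨2 * ((τ i : ℕ)) + 1, by have := (τ i).isLt; omega⟩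
            ⟨2 * (i : ℕ) + 2, bnd2 m i⟩) *
         (∏ i : Fin m, A ⟨2 * ((ρ i : ℕ)) + 2, by have := (ρ i).isLt; omega⟩
            ⟨2 * (i : ℕ) + 1, bnd1 m i⟩)) := by
  rw [← Equiv.prod_comp (c m) (fun k => A (gperm m τ ρ k) k)]
  rw [Fintype.prod_sum_type, Fintype.prod_sum_type]
  simp only [gperm_inl, gperm_inr_inl, gperm_inr_inr]
  simp only [c_inl, c_inr_inl, c_inr_inr, Fin.prod_univ_one]
  ring


lemma surj {R : Type*} [CommRing R] (hm : 0 < m)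
    (A : Matrix (Fin (2 * m + 1)) (Fin (2 * m + 1)) R)
    (hA : ∀ i j : Fin (2 * m + 1), Even (((i : ℕ) + 1) + ((j : ℕ) + 1)) →
      ((i : ℕ) + 1) + ((j : ℕ) + 1) > 2 → A i j = 0)
    (σ : Perm (Fin (2 * m + 1))) (hσ : ∏ k, A (σ k) k ≠ 0) :
    ∃ τ ρ : Perm (Fin m), gperm m τ ρ = σ := by
  have hfac : ∀ k, A (σ k) k ≠ 0 := fun k hk => hσ (Finset.prod_eq_zero (mem_univ k) hk)
  have hpar : ∀ k : Fin (2 * m + 1),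
      (σ k).val % 2 ≠ k.val % 2 ∨ ((σ k).val = 0 ∧ k.val = 0) := by
    intro k
    by_contra h
    push_neg at h
    obtain ⟨h1, h2⟩ := h
    exact hfac k (hA (σ k) k (by rw [Nat.even_iff]; omega) (by omega))
  -- σ fixes 0
  have hσ0 : σ ⟨0, by omega⟩ = ⟨0, by omega⟩ := by
    by_contra h0
    have h0' : (σ ⟨0, by omega⟩).val ≠ 0 := fun h => h0 (Fin.ext h)
    have hodd : ∀ k : Fin (2 * m + 1), (σ k).val % 2 ≠ k.val % 2 := by
      intro k
      rcases hpar k with h | ⟨h1, h2⟩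
      · exact h
      · exact absurd (Fin.ext h1 : σ k = ⟨0, by omega⟩)
          (by rw [show k = (⟨0, by omega⟩ : Fin (2 * m + 1)) from Fin.ext h2]; exact h0)
    have hcast : ∀ k : Fin (2 * m + 1), ((σ k).val : ZMod 2) = (k.val : ZMod 2) + 1 := by
      intro k
      have h := hodd k
      have h2 : (σ k).val % 2 = (k.val + 1) % 2 := by omega
      have h3 : (((σ k).val : ℕ) : ZMod 2) = ((k.val + 1 : ℕ) : ZMod 2) :=
        (ZMod.natCast_eq_natCast_iff' _ _ _).mpr h2
      rw [h3]; push_cast; ring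
    have hsum : ∑ k : Fin (2 * m + 1), ((σ k).val : ZMod 2)
        = ∑ k : Fin (2 * m + 1), (k.val : ZMod 2) :=
      Equiv.sum_comp σ (fun k : Fin (2 * m + 1) => (k.val : ZMod 2))
    have hsum2 : ∑ k : Fin (2 * m + 1), ((σ k).val : ZMod 2)
        = (∑ k : Fin (2 * m + 1), (k.val : ZMod 2)) + ((2 * m + 1 : ℕ) : ZMod 2) := by
      rw [Finset.sum_congr rfl (fun k _ => hcast k), Finset.sum_add_distrib]
      congr 1
      rw [Finset.sum_const, Finset.card_univ, Fintype.card_fin, nsmul_eq_mul, mul_one]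
    have hz : ((2 * m + 1 : ℕ) : ZMod 2) = 0 := by
      have h0 : (∑ k : Fin (2 * m + 1), (k.val : ZMod 2)) + ((2 * m + 1 : ℕ) : ZMod 2)
          = (∑ k : Fin (2 * m + 1), (k.val : ZMod 2)) + 0 := by
        rw [add_zero, ← hsum2, hsum]
      exact add_left_cancel h0
    have hone : ((2 * m + 1 : ℕ) : ZMod 2) = ((1 : ℕ) : ZMod 2) :=
      (ZMod.natCast_eq_natCast_iff' _ _ _).mpr (by omega)
    rw [hone] at hz
    simp at hz
  -- parity behaviour away from 0
  have hmain : ∀ k : Fin (2 * m + 1), k.val ≠ 0 →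
      (σ k).val ≠ 0 ∧ (σ k).val % 2 ≠ k.val % 2 := by
    intro k hk
    constructor
    · intro h
      have h2 : σ k = σ ⟨0, by omega⟩ := by rw [hσ0]; exact Fin.ext h
      exact hk (congrArg Fin.val (σ.injective h2))
    · rcases hpar k with h | ⟨_, h2⟩
      · exact h
      · exact absurd h2 hk
  -- values of σ on the two parity classes
  have hOdd : ∀ i : Fin m, (σ (c m (Sum.inr (Sum.inr i)))).val % 2 = 1 := by
    intro i
    have := (hmain (c m (Sum.inr (Sum.inr i))) (by rw [c_inr_inr_val]; omega)).2
    rw [c_inr_inr_val] at this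
    omega
  have hEven : ∀ i : Fin m,
      (σ (c m (Sum.inr (Sum.inl i)))).val % 2 = 0 ∧ (σ (c m (Sum.inr (Sum.inl i)))).val ≠ 0 := by
    intro i
    have h1 := hmain (c m (Sum.inr (Sum.inl i))) (by rw [c_inr_inl_val]; omega)
    have h2 := c_inr_inl_val m i
    exact ⟨by omega, h1.1⟩
  -- the two induced maps
  have hτlt : ∀ i : Fin m, (σ (c m (Sum.inr (Sum.inr i)))).val / 2 < m := by
    intro i
    have h1 := hOdd i
    have h2 := (σ (c m (Sum.inr (Sum.inr i)))).isLt
    omega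
  have hρlt : ∀ i : Fin m, (σ (c m (Sum.inr (Sum.inl i)))).val / 2 - 1 < m := by
    intro i
    have h1 := (hEven i).1
    have h1' := (hEven i).2
    have h2 := (σ (c m (Sum.inr (Sum.inl i)))).isLt
    omega
  set τ0 : Fin m → Fin m := fun i => ⟨(σ (c m (Sum.inr (Sum.inr i)))).val / 2, hτlt i⟩ with hτ0
  set ρ0 : Fin m → Fin m := fun i => ⟨(σ (c m (Sum.inr (Sum.inl i)))).val / 2 - 1, hρlt i⟩
    with hρ0
  have hτinj : Function.Injective τ0 := by
    intro i j hij
    have h := congrArg Fin.val hij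
    simp only [hτ0] at h
    have hi := hOdd i
    have hj := hOdd j
    have hval : (σ (c m (Sum.inr (Sum.inr i)))).val = (σ (c m (Sum.inr (Sum.inr j)))).val := by
      omega
    have := (c m).injective (σ.injective (Fin.ext hval))
    simpa using this
  have hρinj : Function.Injective ρ0 := by
    intro i j hij
    have h := congrArg Fin.val hij
    simp only [hρ0] at h
    have hi := (hEven i).1
    have hi' := (hEven i).2
    have hj := (hEven j).1
    have hj' := (hEven j).2
    have hval : (σ (c m (Sum.inr (Sum.inl i)))).val = (σ (c m (Sum.inr (Sum.inl j)))).val := by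
      omega
    have := (c m).injective (σ.injective (Fin.ext hval))
    simpa using this
  refine ⟨Equiv.ofBijective τ0 (Finite.injective_iff_bijective.mp hτinj),
    Equiv.ofBijective ρ0 (Finite.injective_iff_bijective.mp hρinj), Equiv.ext fun k => ?_⟩
  obtain ⟨x, rfl⟩ := (c m).surjective k
  rcases x with a | (i | i)
  · rw [gperm_inl]
    exact (hσ0).symm
  · rw [gperm_inr_inl, Equiv.ofBijective_apply]
    refine Fin.ext ?_
    rw [c_inr_inr_val]
    have h1 := (hEven i).1
    have h1' := (hEven i).2
    have h2 := (σ (c m (Sum.inr (Sum.inl i)))).isLt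
    simp only [hρ0]
    omega
  · rw [gperm_inr_inr, Equiv.ofBijective_apply]
    refine Fin.ext ?_
    rw [c_inr_inl_val]
    have h1 := hOdd i
    simp only [hτ0]
    omega


end Stmt2Aux

open Stmt2Aux Equiv Finset

/-- If `A = [a_{i,j}]_{1 ≤ i,j ≤ n}` (rows/columns indexed `1..n`, realized as
`Fin n` with `i` standing for the `(i+1)`-st row/column) is a matrix over a commutative ring
with `a_{i,j} = 0` whenever `i + j` is an even number greater than two, and `n = 2m+1` with
`m ≥ 1`, then `per(A) = a_{1,1} * per[a_{2i,2j+1}]_{1≤i,j≤m} * per[a_{2i+1,2j}]_{1≤i,j≤m}`. -/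
theorem stmt2 {R : Type*} [CommRing R] (m : ℕ) (hm : 0 < m)
    (A : Matrix (Fin (2 * m + 1)) (Fin (2 * m + 1)) R)
    (hA : ∀ i j : Fin (2 * m + 1), Even (((i : ℕ) + 1) + ((j : ℕ) + 1)) →
      ((i : ℕ) + 1) + ((j : ℕ) + 1) > 2 → A i j = 0) :
    A.permanent =
      A ⟨0, by omega⟩ ⟨0, by omega⟩ *
      ((Matrix.of fun i j : Fin m =>
          A ⟨2 * (i : ℕ) + 1, by have := i.isLt; omega⟩
            ⟨2 * (j : ℕ) + 2, by have := j.isLt; omega⟩).permanent *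
      (Matrix.of fun i j : Fin m =>
          A ⟨2 * (i : ℕ) + 2, by have := i.isLt; omega⟩
            ⟨2 * (j : ℕ) + 1, by have := j.isLt; omega⟩).permanent) := by
  classical
  have main : ∑ p : Perm (Fin m) × Perm (Fin m),
      (A ⟨0, by omega⟩ ⟨0, by omega⟩ *
        ((∏ i : Fin m, A ⟨2 * ((p.1 i : ℕ)) + 1, by have := (p.1 i).isLt; omega⟩
            ⟨2 * (i : ℕ) + 2, by have := i.isLt; omega⟩) *
         (∏ i : Fin m, A ⟨2 * ((p.2 i : ℕ)) + 2, by have := (p.2 i).isLt; omega⟩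
            ⟨2 * (i : ℕ) + 1, by have := i.isLt; omega⟩)))
      = ∑ σ : Perm (Fin (2 * m + 1)), ∏ k, A (σ k) k := by
    refine Finset.sum_bij_ne_zero (fun p _ _ => gperm m p.1 p.2)
      (fun _ _ _ => mem_univ _) ?_ ?_ ?_
    · intro p1 _ _ p2 _ _ h
      obtain ⟨h1, h2⟩ := gperm_inj m h
      exact Prod.ext h1 h2
    · intro σ _ hσ
      obtain ⟨τ, ρ, hτρ⟩ := surj m hm A hA σ hσ
      refine ⟨(τ, ρ), mem_univ _, ?_, hτρ⟩
      rw [← prod_gperm m A τ ρ, hτρ]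
      exact hσ
    · intro p _ _
      exact (prod_gperm m A p.1 p.2).symm
  rw [Matrix.permanent, ← main, Matrix.permanent, Matrix.permanent]
  simp only [Matrix.of_apply]
  rw [Fintype.sum_prod_type, Finset.sum_mul_sum, Finset.mul_sum]
  refine Finset.sum_congr rfl fun τ _ => ?_
  rw [Finset.mul_sum]
end

section
/- Let $A=[a_{i,j}]_{1\le i,j\le n}$ be a symmetric matrix over a commutative ring (i.e. $a_{j,i}=a_{i,j}$ for all $i,j$) such that $a_{i,j}=0$ whenever $i+j$ is an even number greater than two. If $n>1$ is odd, then $\mathrm{per}(A)=a_{1,1}\left(\mathrm{per}[a_{2i,2j+1}]_{1\le i,j\le (n-1)/2}\right)^2$. -/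
open Equiv Finset

private lemma perm_submx {R : Type*} [CommSemiring R] {α β : Type*}
    [DecidableEq α] [Fintype α] [DecidableEq β] [Fintype β]
    (e : β ≃ α) (A : Matrix α α R) :
    (A.submatrix e e).permanent = A.permanent := by
  unfold Matrix.permanent
  rw [← Equiv.sum_comp (Equiv.permCongr e) fun σ : Equiv.Perm α => ∏ i, A (σ i) i]
  refine Finset.sum_congr rfl fun σ _ => ?_
  rw [← Equiv.prod_comp e fun i => A ((e.permCongr σ) i) i]
  simp [Matrix.submatrix_apply, Equiv.permCongr_apply]

private lemma perm_key {R : Type*} [CommSemiring R] {α : Type*} [DecidableEq α] [Fintype α]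
    (M : Matrix (Option (α ⊕ α)) (Option (α ⊕ α)) R)
    (h1 : ∀ j, M none (some (Sum.inr j)) = 0)
    (h2 : ∀ j, M (some (Sum.inr j)) none = 0)
    (h3 : ∀ a b, M (some (Sum.inl a)) (some (Sum.inl b)) = 0)
    (h4 : ∀ a b, M (some (Sum.inr a)) (some (Sum.inr b)) = 0) :
    M.permanent = M none none *
      ((∑ g : Equiv.Perm α, ∏ a, M (some (Sum.inr (g a))) (some (Sum.inl a))) *
       (∑ h : Equiv.Perm α, ∏ b, M (some (Sum.inl (h b))) (some (Sum.inr b)))) := by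
  classical
  set Φ : Equiv.Perm α × Equiv.Perm α → Equiv.Perm (Option (α ⊕ α)) :=
    fun p => Equiv.optionCongr ((Equiv.sumCongr p.1 p.2).trans (Equiv.sumComm α α)) with hΦ
  have hΦl : ∀ p a, Φ p (some (Sum.inl a)) = some (Sum.inr (p.1 a)) := fun p a => rfl
  have hΦr : ∀ p b, Φ p (some (Sum.inr b)) = some (Sum.inl (p.2 b)) := fun p b => rfl
  have hΦn : ∀ p, Φ p none = none := fun p => rfl
  have hΦinj : ∀ p ∈ (Finset.univ : Finset (Equiv.Perm α × Equiv.Perm α)), ∀ q ∈ Finset.univ,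
      Φ p = Φ q → p = q := by
    rintro ⟨g, h⟩ - ⟨g', h'⟩ - hpq
    have hg : ∀ a, g a = g' a := by
      intro a
      have := (hΦl (g, h) a).symm.trans ((congrFun (congrArg DFunLike.coe hpq)
        (some (Sum.inl a))).trans (hΦl (g', h') a))
      simpa using this
    have hh : ∀ b, h b = h' b := by
      intro b
      have := (hΦr (g, h) b).symm.trans ((congrFun (congrArg DFunLike.coe hpq)
        (some (Sum.inr b))).trans (hΦr (g', h') b))
      simpa using this
    exact Prod.ext (Equiv.ext hg) (Equiv.ext hh)
  have hzero : ∀ σ : Equiv.Perm (Option (α ⊕ α)),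
      σ ∉ Finset.image Φ Finset.univ → ∏ x, M (σ x) x = 0 := by
    intro σ hσ
    by_contra hne
    have hfac : ∀ x, M (σ x) x ≠ 0 := fun x hx =>
      hne (Finset.prod_eq_zero (Finset.mem_univ x) hx)
    -- counting sets
    set S : Finset (Option (α ⊕ α)) :=
      insert none (Finset.univ.image fun b : α => some (Sum.inr b)) with hS
    set T : Finset (Option (α ⊕ α)) :=
      insert none (Finset.univ.image fun a : α => some (Sum.inl a)) with hT
    have hSmem : ∀ x, x ∈ S ↔ (x = none ∨ ∃ b, x = some (Sum.inr b)) := by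
      intro x; simp [hS, eq_comm]
    have hTmem : ∀ x, x ∈ T ↔ (x = none ∨ ∃ a, x = some (Sum.inl a)) := by
      intro x; simp [hT, eq_comm]
    have hmaps : ∀ s ∈ S, σ s ∈ T := by
      intro s hs
      rcases (hSmem s).mp hs with rfl | ⟨b, rfl⟩
      · rcases hx : σ none with - | a | b
        · exact (hTmem _).mpr (Or.inl rfl)
        · exact (hTmem _).mpr (Or.inr ⟨a, rfl⟩)
        · exact absurd (hx ▸ h2 b) (hfac none)
      · rcases hx : σ (some (Sum.inr b)) with - | a | b'
        · exact (hTmem _).mpr (Or.inl rfl)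
        · exact (hTmem _).mpr (Or.inr ⟨a, rfl⟩)
        · exact absurd (hx ▸ h4 b' b) (hfac (some (Sum.inr b)))
    have hcardS : S.card = Fintype.card α + 1 := by
      rw [hS, Finset.card_insert_of_notMem (by simp),
        Finset.card_image_of_injective _ (fun a b hab => by simpa using hab)]
      simp
    have hcardT : T.card = Fintype.card α + 1 := by
      rw [hT, Finset.card_insert_of_notMem (by simp),
        Finset.card_image_of_injective _ (fun a b hab => by simpa using hab)]
      simp
    have himg : S.image σ = T := by
      apply Finset.eq_of_subset_of_card_le
      · intro y hy
        rcases Finset.mem_image.mp hy with ⟨s, hs, rfl⟩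
        exact hmaps s hs
      · rw [Finset.card_image_of_injective _ σ.injective, hcardS, hcardT]
    have hσnone : σ none = none := by
      have : none ∈ S.image σ := himg ▸ (hTmem none).mpr (Or.inl rfl)
      rcases Finset.mem_image.mp this with ⟨s, hs, hsnone⟩
      rcases (hSmem s).mp hs with rfl | ⟨b, rfl⟩
      · exact hsnone
      · exact absurd (hsnone ▸ h1 b) (hfac (some (Sum.inr b)))
    have hinl : ∀ a, ∃ b, σ (some (Sum.inl a)) = some (Sum.inr b) := by
      intro a
      have hnotT : σ (some (Sum.inl a)) ∉ T := by
        intro hmem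
        rcases Finset.mem_image.mp (himg ▸ hmem) with ⟨s, hs, hseq⟩
        have : s = some (Sum.inl a) := σ.injective hseq
        subst this
        rcases (hSmem _).mp hs with h | ⟨b, h⟩ <;> simp at h
      rcases hx : σ (some (Sum.inl a)) with - | a' | b
      · exact absurd ((hTmem _).mpr (Or.inl rfl)) (hx ▸ hnotT)
      · exact absurd ((hTmem _).mpr (Or.inr ⟨a', rfl⟩)) (hx ▸ hnotT)
      · exact ⟨b, rfl⟩
    have hinr : ∀ b, ∃ a, σ (some (Sum.inr b)) = some (Sum.inl a) := by
      intro b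
      have hmem : σ (some (Sum.inr b)) ∈ T :=
        hmaps _ ((hSmem _).mpr (Or.inr ⟨b, rfl⟩))
      rcases (hTmem _).mp hmem with h | ⟨a, h⟩
      · exact absurd (σ.injective (h.trans hσnone.symm)) (by simp)
      · exact ⟨a, h⟩
    -- build the pair of permutations
    set g0 : α → α := fun a => Classical.choose (hinl a) with hg0
    have hg0spec : ∀ a, σ (some (Sum.inl a)) = some (Sum.inr (g0 a)) :=
      fun a => Classical.choose_spec (hinl a)
    have hg0inj : Function.Injective g0 := by
      intro a a' haa'
      have : σ (some (Sum.inl a)) = σ (some (Sum.inl a')) := by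
        rw [hg0spec, hg0spec, haa']
      simpa using σ.injective this
    set h0 : α → α := fun b => Classical.choose (hinr b) with hh0
    have hh0spec : ∀ b, σ (some (Sum.inr b)) = some (Sum.inl (h0 b)) :=
      fun b => Classical.choose_spec (hinr b)
    have hh0inj : Function.Injective h0 := by
      intro b b' hbb'
      have : σ (some (Sum.inr b)) = σ (some (Sum.inr b')) := by
        rw [hh0spec, hh0spec, hbb']
      simpa using σ.injective this
    refine hσ (Finset.mem_image.mpr ⟨(Equiv.ofBijective g0 (Finite.injective_iff_bijective.mp hg0inj),
      Equiv.ofBijective h0 (Finite.injective_iff_bijective.mp hh0inj)), Finset.mem_univ _, ?_⟩)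
    apply Equiv.ext
    rintro (- | a | b)
    · exact (hΦn _).trans hσnone.symm
    · exact (hΦl _ a).trans (hg0spec a).symm
    · exact (hΦr _ b).trans (hh0spec b).symm
  -- main computation
  calc M.permanent = ∑ σ ∈ Finset.image Φ Finset.univ, ∏ x, M (σ x) x := by
        rw [Matrix.permanent]
        exact (Finset.sum_subset (Finset.subset_univ _) fun σ _ hσ => hzero σ hσ).symm
    _ = ∑ p : Equiv.Perm α × Equiv.Perm α, ∏ x, M (Φ p x) x :=
        Finset.sum_image hΦinj
    _ = ∑ p : Equiv.Perm α × Equiv.Perm α, M none none *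
          ((∏ a, M (some (Sum.inr (p.1 a))) (some (Sum.inl a))) *
           (∏ b, M (some (Sum.inl (p.2 b))) (some (Sum.inr b)))) := by
        refine Finset.sum_congr rfl fun p _ => ?_
        rw [Fintype.prod_option, Fintype.prod_sum_type]
        simp only [hΦn, hΦl, hΦr]
    _ = M none none *
          ((∑ g : Equiv.Perm α, ∏ a, M (some (Sum.inr (g a))) (some (Sum.inl a))) *
           (∑ h : Equiv.Perm α, ∏ b, M (some (Sum.inl (h b))) (some (Sum.inr b)))) := by
        rw [← Finset.mul_sum, Finset.sum_mul_sum]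
        rw [Fintype.sum_prod_type]

/-- If `A = [a_{i,j}]_{1 ≤ i,j ≤ n}` (rows/columns indexed `1..n`, realized as
`Fin n` with `i` standing for the `(i+1)`-st row/column) is a symmetric matrix over a
commutative ring with `a_{i,j} = 0` whenever `i + j` is an even number greater than two,
and `n > 1` is odd, then `per(A) = a_{1,1} * (per[a_{2i,2j+1}]_{1≤i,j≤(n-1)/2})^2`. -/
theorem stmt6 {R : Type*} [CommRing R] (n : ℕ) (hn1 : 1 < n) (hn : Odd n)
    (A : Matrix (Fin n) (Fin n) R)
    (hsymm : ∀ i j : Fin n, A j i = A i j)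
    (hA : ∀ i j : Fin n, Even (((i : ℕ) + 1) + ((j : ℕ) + 1)) →
      ((i : ℕ) + 1) + ((j : ℕ) + 1) > 2 → A i j = 0) :
    A.permanent =
      A ⟨0, by omega⟩ ⟨0, by omega⟩ *
      (Matrix.of fun i j : Fin ((n - 1) / 2) =>
          A ⟨2 * (i : ℕ) + 1, by obtain ⟨k, hk⟩ := hn; have := i.isLt; omega⟩
            ⟨2 * (j : ℕ) + 2, by obtain ⟨k, hk⟩ := hn; have := j.isLt; omega⟩).permanent ^ 2 := by
  classical
  set m := (n - 1) / 2 with hmdef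
  have hn2 : n = 2 * m + 1 := by obtain ⟨k, hk⟩ := hn; omega
  set f : Option (Fin m ⊕ Fin m) → Fin n := fun x => match x with
    | none => ⟨0, by omega⟩
    | some (Sum.inl a) => ⟨2 * (a : ℕ) + 1, by have := a.isLt; omega⟩
    | some (Sum.inr b) => ⟨2 * (b : ℕ) + 2, by have := b.isLt; omega⟩ with hf
  have hfinj : Function.Injective f := by
    rintro (- | a | b) (- | a' | b') h <;>
      simp only [hf, Fin.mk.injEq] at h <;>
      first
        | rfl
        | (exfalso; omega)
        | (simp only [Option.some.injEq, Sum.inl.injEq, Sum.inr.injEq]; exact Fin.ext (by omega))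
  have hbij : Function.Bijective f :=
    (Fintype.bijective_iff_injective_and_card f).mpr ⟨hfinj, by simp [hn2]; omega⟩
  set e : Option (Fin m ⊕ Fin m) ≃ Fin n := Equiv.ofBijective f hbij with he
  set M : Matrix (Option (Fin m ⊕ Fin m)) (Option (Fin m ⊕ Fin m)) R := A.submatrix e e with hM
  have hperm : A.permanent = M.permanent := (perm_submx e A).symm
  rw [hperm, perm_key M ?h1 ?h2 ?h3 ?h4]
  case h1 =>
    intro j
    exact hA ⟨0, by omega⟩ ⟨2 * (j : ℕ) + 2, by have := j.isLt; omega⟩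
      (Nat.even_iff.mpr (show (0 + 1 + (2 * (j : ℕ) + 2 + 1)) % 2 = 0 by omega))
      (show 0 + 1 + (2 * (j : ℕ) + 2 + 1) > 2 by omega)
  case h2 =>
    intro j
    exact hA ⟨2 * (j : ℕ) + 2, by have := j.isLt; omega⟩ ⟨0, by omega⟩
      (Nat.even_iff.mpr (show (2 * (j : ℕ) + 2 + 1 + (0 + 1)) % 2 = 0 by omega))
      (show 2 * (j : ℕ) + 2 + 1 + (0 + 1) > 2 by omega)
  case h3 =>
    intro a b
    exact hA ⟨2 * (a : ℕ) + 1, by have := a.isLt; omega⟩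
      ⟨2 * (b : ℕ) + 1, by have := b.isLt; omega⟩
      (Nat.even_iff.mpr (show (2 * (a : ℕ) + 1 + 1 + (2 * (b : ℕ) + 1 + 1)) % 2 = 0 by omega))
      (show 2 * (a : ℕ) + 1 + 1 + (2 * (b : ℕ) + 1 + 1) > 2 by omega)
  case h4 =>
    intro a b
    exact hA ⟨2 * (a : ℕ) + 2, by have := a.isLt; omega⟩
      ⟨2 * (b : ℕ) + 2, by have := b.isLt; omega⟩
      (Nat.even_iff.mpr (show (2 * (a : ℕ) + 2 + 1 + (2 * (b : ℕ) + 2 + 1)) % 2 = 0 by omega))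
      (show 2 * (a : ℕ) + 2 + 1 + (2 * (b : ℕ) + 2 + 1) > 2 by omega)
  have hS2 : (∑ h : Equiv.Perm (Fin m), ∏ b, M (some (Sum.inl (h b))) (some (Sum.inr b))) =
      (Matrix.of fun i j : Fin m =>
          A ⟨2 * (i : ℕ) + 1, by omega⟩ ⟨2 * (j : ℕ) + 2, by omega⟩).permanent := rfl
  have hS1 : (∑ g : Equiv.Perm (Fin m), ∏ a, M (some (Sum.inr (g a))) (some (Sum.inl a))) =
      (Matrix.of fun i j : Fin m =>
          A ⟨2 * (i : ℕ) + 1, by omega⟩ ⟨2 * (j : ℕ) + 2, by omega⟩).permanent := by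
    rw [← Matrix.permanent_transpose]
    unfold Matrix.permanent
    exact Finset.sum_congr rfl fun g _ => Finset.prod_congr rfl fun a _ => hsymm _ _
  rw [hS1, hS2, pow_two]
  rfl
end

section
/- Let $p>3$ be a prime and let $c,d$ be integers. Then $\det\left[(i^2+cij+dj^2)^{p-2}\right]_{0\le i,j\le p-1}\equiv 0\pmod p$. -/
/-- For any prime `p > 3` and integers `c, d`, the determinant of the `p × p`
integer matrix with `(i,j)` entry `(i² + c·i·j + d·j²)^(p-2)` for `0 ≤ i, j ≤ p-1` is
divisible by `p`. -/
theorem stmt10 (p : ℕ) (hp : p.Prime) (hp3 : 3 < p) (c d : ℤ) :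
    (p : ℤ) ∣
      (Matrix.of fun i j : Fin p =>
        (((i : ℕ) : ℤ) ^ 2 + c * ((i : ℕ) : ℤ) * ((j : ℕ) : ℤ)
          + d * ((j : ℕ) : ℤ) ^ 2) ^ (p - 2)).det := by
  haveI : Fact p.Prime := ⟨hp⟩
  set q : ℕ := p - 2 with hq
  set r : ℕ := p - 3 with hr
  have hq0 : q ≠ 0 := by omega
  have hr0 : r ≠ 0 := by omega
  have h2q : 2 * q = (p - 1) + r := by omega
  -- reduce to ZMod p
  rw [← ZMod.intCast_zmod_eq_zero_iff_dvd]
  have hmap : (((Matrix.of fun i j : Fin p =>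
        (((i : ℕ) : ℤ) ^ 2 + c * ((i : ℕ) : ℤ) * ((j : ℕ) : ℤ)
          + d * ((j : ℕ) : ℤ) ^ 2) ^ (p - 2)).det : ℤ) : ZMod p)
      = (Matrix.of fun i j : Fin p =>
          (((i : ℕ) : ZMod p) ^ 2 + (c : ZMod p) * ((i : ℕ) : ZMod p) * ((j : ℕ) : ZMod p)
            + (d : ZMod p) * ((j : ℕ) : ZMod p) ^ 2) ^ (p - 2)).det := by
    rw [show (((Matrix.of fun i j : Fin p =>
        (((i : ℕ) : ℤ) ^ 2 + c * ((i : ℕ) : ℤ) * ((j : ℕ) : ℤ)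
          + d * ((j : ℕ) : ℤ) ^ 2) ^ (p - 2)).det : ℤ) : ZMod p)
      = (Int.castRingHom (ZMod p)) ((Matrix.of fun i j : Fin p =>
        (((i : ℕ) : ℤ) ^ 2 + c * ((i : ℕ) : ℤ) * ((j : ℕ) : ℤ)
          + d * ((j : ℕ) : ℤ) ^ 2) ^ (p - 2)).det) from rfl,
      RingHom.map_det]
    congr 1
    ext i j
    simp only [RingHom.mapMatrix_apply, Matrix.map_apply, Matrix.of_apply,
      Int.coe_castRingHom]
    push_cast
    ring
  rw [hmap]
  set N : Matrix (Fin p) (Fin p) (ZMod p) := Matrix.of fun i j : Fin p =>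
          (((i : ℕ) : ZMod p) ^ 2 + (c : ZMod p) * ((i : ℕ) : ZMod p) * ((j : ℕ) : ZMod p)
            + (d : ZMod p) * ((j : ℕ) : ZMod p) ^ 2) ^ (p - 2) with hN
  -- basic power lemma : x ^ (2q) = x ^ r
  have hpow : ∀ x : ZMod p, x ^ (2 * q) = x ^ r := by
    intro x
    rcases eq_or_ne x 0 with h | h
    · rw [h, zero_pow (by omega), zero_pow hr0]
    · rw [h2q, pow_add, ZMod.pow_card_sub_one_eq_one h, one_mul]
  -- the bijection Fin p → ZMod p
  have hbij : Function.Bijective (fun i : Fin p => ((i : ℕ) : ZMod p)) := by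
    rw [Fintype.bijective_iff_injective_and_card]
    refine ⟨fun a b h => Fin.ext ?_, by simp [ZMod.card]⟩
    have h' : (((a : ℕ) : ZMod p)) = (((b : ℕ) : ZMod p)) := h
    have ha := ZMod.val_cast_of_lt (n := p) a.isLt
    have hb := ZMod.val_cast_of_lt (n := p) b.isLt
    rw [← ha, ← hb, h']
  set S : ZMod p := ∑ u : ZMod p, (u ^ 2 + (c : ZMod p) * u + (d : ZMod p)) ^ q with hS
  -- key row-sum identity
  have key : ∀ y : ZMod p,
      ∑ x : ZMod p, (x ^ 2 + (c : ZMod p) * x * y + (d : ZMod p) * y ^ 2) ^ q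
        = S * y ^ r := by
    intro y
    rcases eq_or_ne y 0 with h | h
    · subst h
      rw [zero_pow hr0, mul_zero]
      have hz : ∀ x : ZMod p,
          (x ^ 2 + (c : ZMod p) * x * 0 + (d : ZMod p) * 0 ^ 2) ^ q = x ^ r := by
        intro x
        rw [show x ^ 2 + (c : ZMod p) * x * 0 + (d : ZMod p) * 0 ^ 2 = x ^ 2 by ring,
          ← pow_mul, hpow]
      rw [Finset.sum_congr rfl fun x _ => hz x]
      exact FiniteField.sum_pow_lt_card_sub_one (K := ZMod p) r (by rw [ZMod.card]; omega)
    · have hpt : ∀ u : ZMod p,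
          (y ^ 2) ^ q * (u ^ 2 + (c : ZMod p) * u + (d : ZMod p)) ^ q
            = ((u * y) ^ 2 + (c : ZMod p) * (u * y) * y + (d : ZMod p) * y ^ 2) ^ q := by
        intro u
        rw [← mul_pow]
        congr 1
        ring
      have hb := Fintype.sum_bijective (fun u : ZMod p => u * y)
        (mulRight_bijective₀ y h)
        (fun u => (y ^ 2) ^ q * (u ^ 2 + (c : ZMod p) * u + (d : ZMod p)) ^ q)
        (fun x => (x ^ 2 + (c : ZMod p) * x * y + (d : ZMod p) * y ^ 2) ^ q)
        (fun u => hpt u)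
      rw [← hb, ← Finset.mul_sum, ← hS, ← pow_mul, hpow, mul_comm]
  -- entry of row 0
  have row0 : ∀ j : Fin p, N 0 j = (d : ZMod p) ^ q * ((j : ℕ) : ZMod p) ^ r := by
    intro j
    have h0 : ((((0 : Fin p) : ℕ)) : ZMod p) = 0 := by
      norm_num [Fin.val_zero]
    rw [hN, Matrix.of_apply, h0]
    rw [show (0 : ZMod p) ^ 2 + (c : ZMod p) * 0 * ((j : ℕ) : ZMod p)
        + (d : ZMod p) * ((j : ℕ) : ZMod p) ^ 2
        = (d : ZMod p) * ((j : ℕ) : ZMod p) ^ 2 by ring]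
    rw [mul_pow, ← pow_mul, hpow]
  -- row sums
  have rowsum : ∀ j : Fin p, ∑ i : Fin p, N i j = S * ((j : ℕ) : ZMod p) ^ r := by
    intro j
    rw [← key ((j : ℕ) : ZMod p)]
    exact Fintype.sum_bijective _ hbij _ _ (fun i => rfl)
  rcases eq_or_ne (d : ZMod p) 0 with hd | hd
  · -- row 0 is zero
    apply Matrix.det_eq_zero_of_row_eq_zero 0
    intro j
    rw [row0 j, hd, zero_pow hq0, zero_mul]
  · -- linear dependence of rows
    have hne10 : (1 : Fin p) ≠ 0 := by
      have h1 : ((1 : Fin p) : ℕ) ≠ ((0 : Fin p) : ℕ) := by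
        rw [Fin.val_one' p, Fin.val_zero p, Nat.mod_eq_of_lt (show 1 < p by omega)]
        exact one_ne_zero
      exact fun h => h1 (congrArg Fin.val h)
    rw [← Matrix.exists_vecMul_eq_zero_iff]
    set v : Fin p → ZMod p := fun i => (d : ZMod p) ^ q - (if i = 0 then S else 0) with hv
    refine ⟨v, ?_, ?_⟩
    · intro h0
      have h1 : v 1 = 0 := by rw [h0]; rfl
      rw [hv] at h1
      simp only [if_neg hne10, sub_zero] at h1
      exact pow_ne_zero q hd h1
    · funext j
      have hvm : Matrix.vecMul v N j = ∑ i : Fin p, v i * N i j := rfl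
      show Matrix.vecMul v N j = 0
      rw [hvm, hv]
      simp only [sub_mul, Finset.sum_sub_distrib, ite_mul, zero_mul,
        Finset.sum_ite_eq' Finset.univ (0 : Fin p) (fun i => S * N i j),
        Finset.mem_univ, if_true]
      rw [← Finset.mul_sum, rowsum j, row0 j]
      ring
end

section
/- Let $p>3$ be a prime with $p\equiv 3\pmod 4$. Then for every integer $c$, $D_p(c,-1)\equiv 0\pmod p$. -/
/-- `D_p(c,d)`: the determinant of the `(p-1) × (p-1)` integer matrix with `(i,j)` entry
`(i² + c·i·j + d·j²)^(p-2)` for `1 ≤ i, j ≤ p-1`. -/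
def Dp (p : ℕ) (c d : ℤ) : ℤ :=
  (Matrix.of fun i j : Fin (p - 1) =>
    (((i : ℕ) + 1 : ℤ) ^ 2 + c * ((i : ℕ) + 1 : ℤ) * ((j : ℕ) + 1 : ℤ)
      + d * ((j : ℕ) + 1 : ℤ) ^ 2) ^ (p - 2)).det

/-- Key vanishing sum: for `p ≡ 3 (mod 4)` and `i ≠ 0`, the sum over all of `ZMod p`
of `(i² + c·i·x - x²)^(p-2) · x^((p+1)/2)` vanishes, via the involution `x ↦ -i²/x`. -/
lemma key_sum (p : ℕ) [Fact p.Prime] (hp5 : 5 ≤ p) (hp4 : p % 4 = 3) (c : ZMod p)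
    (i : ZMod p) (hi : i ≠ 0) :
    ∑ x : ZMod p, (i ^ 2 + c * i * x - x ^ 2) ^ (p - 2) * x ^ ((p + 1) / 2) = 0 := by
  have hpodd : p % 2 = 1 := by omega
  set m := (p + 1) / 2 with hm
  have h2m : 2 * m = p + 1 := by omega
  have hm0 : m ≠ 0 := by omega
  have hoddE : Odd (p - 2 + m) := by rw [Nat.odd_iff]; omega
  set f : ZMod p → ZMod p := fun x => (i ^ 2 + c * i * x - x ^ 2) ^ (p - 2) * x ^ m with hf
  have hi1 : i ^ (p - 1) = 1 := ZMod.pow_card_sub_one_eq_one hi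
  have hψ : Function.Involutive (fun x : ZMod p => -i ^ 2 * x⁻¹) := by
    intro x
    rcases eq_or_ne x 0 with rfl | hx
    · simp
    · have hi2 : (-i ^ 2 : ZMod p) ≠ 0 := by
        simpa using pow_ne_zero 2 hi
      field_simp
  have hneg : ∀ x : ZMod p, f (-i ^ 2 * x⁻¹) = -f x := by
    intro x
    rcases eq_or_ne x 0 with rfl | hx
    · simp [hf, zero_pow hm0]
    · have hx1 : x ^ (p - 1) = 1 := ZMod.pow_card_sub_one_eq_one hx
      obtain ⟨w, hw⟩ : ∃ w : ZMod p, w = -i ^ 2 * x⁻¹ := ⟨_, rfl⟩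
      rw [← hw]
      have hwx : w * x = -i ^ 2 := by
        rw [hw]; field_simp
      have hA : (i ^ 2 + c * i * w - w ^ 2) * x ^ 2
          = -i ^ 2 * (i ^ 2 + c * i * x - x ^ 2) := by
        rw [hw]; field_simp; ring
      have hxc : x ^ (2 * (p - 2) + m) ≠ 0 := pow_ne_zero _ hx
      apply mul_right_cancel₀ hxc
      have e1 : f w * x ^ (2 * (p - 2) + m)
          = ((i ^ 2 + c * i * w - w ^ 2) * x ^ 2) ^ (p - 2) * (w * x) ^ m := by
        simp only [hf]
        rw [mul_pow, mul_pow, pow_add, pow_mul]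
        ring
      have e2 : (-i ^ 2) ^ (p - 2 + m) = -1 := by
        rw [hoddE.neg_pow, ← pow_mul]
        rw [show 2 * (p - 2 + m) = (p - 1) * 3 by omega, pow_mul, hi1, one_pow]
      have e3 : -f x * x ^ (2 * (p - 2) + m)
          = -((i ^ 2 + c * i * x - x ^ 2) ^ (p - 2) * (x ^ (p - 1)) ^ 3) := by
        simp only [hf]
        rw [← pow_mul, show (p - 1) * 3 = m + (2 * (p - 2) + m) by omega, pow_add]
        ring
      rw [e1, hA, hwx, mul_pow, e3, hx1, one_pow]
      calc (-i ^ 2) ^ (p - 2) * (i ^ 2 + c * i * x - x ^ 2) ^ (p - 2) * (-i ^ 2) ^ m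
          = (-i ^ 2) ^ (p - 2 + m) * (i ^ 2 + c * i * x - x ^ 2) ^ (p - 2) := by
            rw [pow_add]; ring
        _ = -((i ^ 2 + c * i * x - x ^ 2) ^ (p - 2) * 1) := by rw [e2]; ring
  have hsum : ∑ x : ZMod p, f x = -∑ x : ZMod p, f x := by
    conv_lhs => rw [← Function.Bijective.sum_comp hψ.bijective f]
    rw [← Finset.sum_neg_distrib]
    exact Finset.sum_congr rfl fun x _ => hneg x
  have h2 : (2 : ZMod p) ≠ 0 := by
    have h22 : ((2 : ℕ) : ZMod p) = 0 ↔ p ∣ 2 := ZMod.natCast_eq_zero_iff 2 p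
    intro h
    have hd : p ∣ 2 := h22.mp (by exact_mod_cast h)
    have := Nat.le_of_dvd (by norm_num) hd
    omega
  have h2S : (2 : ZMod p) * ∑ x : ZMod p, f x = 0 := by
    rw [two_mul]
    nth_rewrite 2 [hsum]
    ring
  rcases mul_eq_zero.mp h2S with h | h
  · exact absurd h h2
  · exact h

/-- For any prime `p > 3` with `p ≡ 3 (mod 4)` and any integer `c`,
`D_p(c, -1) ≡ 0 (mod p)`. -/
theorem stmt13 (p : ℕ) (hp : p.Prime) (hp3 : 3 < p) (hp4 : p % 4 = 3) (c : ℤ) :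
    (p : ℤ) ∣ Dp p c (-1) := by
  haveI : Fact p.Prime := ⟨hp⟩
  have hp5 : 5 ≤ p := by omega
  rw [← ZMod.intCast_zmod_eq_zero_iff_dvd]
  unfold Dp
  have hmapdet : ((((Matrix.of fun i j : Fin (p - 1) =>
      (((i : ℕ) + 1 : ℤ) ^ 2 + c * ((i : ℕ) + 1 : ℤ) * ((j : ℕ) + 1 : ℤ)
        + (-1) * ((j : ℕ) + 1 : ℤ) ^ 2) ^ (p - 2)).det : ℤ)) : ZMod p)
      = ((Matrix.of fun i j : Fin (p - 1) =>
      (((i : ℕ) + 1 : ℤ) ^ 2 + c * ((i : ℕ) + 1 : ℤ) * ((j : ℕ) + 1 : ℤ)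
        + (-1) * ((j : ℕ) + 1 : ℤ) ^ 2) ^ (p - 2)).map
        (Int.castRingHom (ZMod p))).det := by
    have := RingHom.map_det (Int.castRingHom (ZMod p)) (Matrix.of fun i j : Fin (p - 1) =>
      (((i : ℕ) + 1 : ℤ) ^ 2 + c * ((i : ℕ) + 1 : ℤ) * ((j : ℕ) + 1 : ℤ)
        + (-1) * ((j : ℕ) + 1 : ℤ) ^ 2) ^ (p - 2))
    simpa [RingHom.mapMatrix_apply] using this
  rw [hmapdet]
  rw [← Matrix.exists_mulVec_eq_zero_iff]
  set m := (p + 1) / 2 with hm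
  refine ⟨fun j : Fin (p - 1) => (((j : ℕ) + 1 : ℕ) : ZMod p) ^ m, ?_, ?_⟩
  · intro h0
    have h1 := congrFun h0 ⟨0, by omega⟩
    simp at h1
  · funext i
    have hIlt : (i : ℕ) + 1 < p := by omega
    have hIne : (((i : ℕ) + 1 : ℕ) : ZMod p) ≠ 0 := by
      rw [Ne, ZMod.natCast_eq_zero_iff]
      intro h
      have := Nat.le_of_dvd (by omega) h
      omega
    set I : ZMod p := (((i : ℕ) + 1 : ℕ) : ZMod p) with hI
    set F : ZMod p → ZMod p :=
      fun x => (I ^ 2 + (c : ZMod p) * I * x - x ^ 2) ^ (p - 2) * x ^ m with hF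
    have key := key_sum p hp5 hp4 (c : ZMod p) I hIne
    have step1 : ∑ x : ZMod p, F x = ∑ k ∈ Finset.range p, F ((k : ℕ) : ZMod p) := by
      refine Finset.sum_nbij' (fun x : ZMod p => x.val) (fun k : ℕ => (k : ZMod p))
        ?_ ?_ ?_ ?_ ?_
      · intro a _
        exact Finset.mem_range.mpr (ZMod.val_lt a)
      · intro a _
        exact Finset.mem_univ _
      · intro a _
        exact ZMod.natCast_rightInverse a
      · intro k hk
        exact ZMod.val_cast_of_lt (Finset.mem_range.mp hk)
      · intro a _
        rw [ZMod.natCast_rightInverse a]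
    have step2 : ∑ k ∈ Finset.range p, F ((k : ℕ) : ZMod p)
        = ∑ k ∈ Finset.range (p - 1), F (((k + 1 : ℕ)) : ZMod p) := by
      have h0 : F ((0 : ℕ) : ZMod p) = 0 := by
        simp [hF, zero_pow (show m ≠ 0 by omega)]
      have hs := Finset.sum_range_succ' (fun k : ℕ => F ((k : ℕ) : ZMod p)) (p - 1)
      rw [show p - 1 + 1 = p by omega] at hs
      rw [hs, h0, add_zero]
    have step3 : ∑ k ∈ Finset.range (p - 1), F (((k + 1 : ℕ)) : ZMod p)
        = ∑ j : Fin (p - 1), F ((((j : ℕ) + 1 : ℕ)) : ZMod p) :=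
      (Fin.sum_univ_eq_sum_range (fun k => F (((k + 1 : ℕ)) : ZMod p)) (p - 1)).symm
    have hrow : ∑ j : Fin (p - 1), F ((((j : ℕ) + 1 : ℕ)) : ZMod p) = 0 := by
      rw [← step3, ← step2, ← step1, hF]
      exact key
    simp only [Matrix.mulVec, dotProduct, Matrix.map_apply, Matrix.of_apply,
      Pi.zero_apply, Int.coe_castRingHom]
    rw [← hrow]
    refine Finset.sum_congr rfl fun j _ => ?_
    simp only [hF, hI]
    push_cast
    ring
end

section
/- Let $p>3$ be a prime with $p\equiv 3\pmod 4$. Then $D_p(2,2)\equiv 0\pmod p$. -/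
variable {p : ℕ} [Fact p.Prime]

lemma sq_add_sq_ne_zero (hp4 : p % 4 = 3) {a b : ZMod p} (hb : b ≠ 0) : a ^ 2 + b ^ 2 ≠ 0 := by
  intro h
  have : IsSquare (-1 : ZMod p) := ⟨a / b, by field_simp; linear_combination -h⟩
  rw [ZMod.exists_sq_eq_neg_one_iff] at this
  exact this hp4

lemma two_ne_zero'' (hp2 : 2 < p) : (2 : ZMod p) ≠ 0 := by
  have : ((2 : ℕ) : ZMod p) ≠ 0 := by
    rw [Ne, ZMod.natCast_eq_zero_iff]
    intro h
    exact absurd (Nat.le_of_dvd two_pos h) (by omega)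
  simpa using this

lemma sum_inv_sq_add_one (hp2 : 2 < p) (hp4 : p % 4 = 3) :
    ∑ u : ZMod p, (u ^ 2 + 1)⁻¹ = 2⁻¹ := by
  have hne : ∀ u : ZMod p, u ^ 2 + 1 ≠ 0 := fun u => by
    have h1 : (1 : ZMod p) ≠ 0 := one_ne_zero
    have := sq_add_sq_ne_zero hp4 h1 (a := u)
    simpa using this
  have hinv : ∑ u : ZMod p, (u ^ 2 + 1)⁻¹ = ∑ u : ZMod p, ((u⁻¹) ^ 2 + 1)⁻¹ :=
    (Fintype.sum_bijective (fun u : ZMod p => u⁻¹)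
      (Function.Involutive.bijective inv_involutive)
      (fun u => ((u⁻¹) ^ 2 + 1)⁻¹) (fun u => (u ^ 2 + 1)⁻¹) (fun x => by simp [inv_inv])).symm
  have hpair : ∀ u : ZMod p, (u ^ 2 + 1)⁻¹ + ((u⁻¹) ^ 2 + 1)⁻¹
      = 1 + if u = 0 then 1 else 0 := by
    intro u
    by_cases hu : u = 0
    · simp [hu]
    · simp only [if_neg hu, add_zero]
      have h1 : u ^ 2 + 1 ≠ 0 := hne u
      have h2 : (u⁻¹) ^ 2 + 1 ≠ 0 := hne u⁻¹
      have h1' : 1 + u ^ 2 ≠ 0 := by rwa [add_comm] at h1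
      field_simp
      ring
  have key : 2 * ∑ u : ZMod p, (u ^ 2 + 1)⁻¹
      = ∑ u : ZMod p, ((u ^ 2 + 1)⁻¹ + ((u⁻¹) ^ 2 + 1)⁻¹) := by
    rw [Finset.sum_add_distrib, ← hinv]; ring
  rw [Finset.sum_congr rfl (fun u _ => hpair u), Finset.sum_add_distrib,
    Finset.sum_ite_eq' Finset.univ (0 : ZMod p) (fun _ => (1 : ZMod p))] at key
  simp only [Finset.sum_const, Finset.card_univ, ZMod.card, nsmul_eq_mul,
    ZMod.natCast_self, zero_mul, Finset.mem_univ, if_true] at key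
  have h2 : (2 : ZMod p) ≠ 0 := two_ne_zero'' hp2
  calc ∑ u : ZMod p, (u ^ 2 + 1)⁻¹
      = 2⁻¹ * (2 * ∑ u : ZMod p, (u ^ 2 + 1)⁻¹) := by
        rw [← mul_assoc, inv_mul_cancel₀ h2, one_mul]
    _ = 2⁻¹ := by rw [key]; ring

lemma sum_inv_Q (hp2 : 2 < p) (hp4 : p % 4 = 3) :
    ∑ t : ZMod p, (2 * t ^ 2 + 2 * t + 1)⁻¹ = 1 := by
  have h2 : (2 : ZMod p) ≠ 0 := two_ne_zero'' hp2
  have he : Function.Bijective (fun t : ZMod p => 2 * t + 1) := by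
    refine Finite.injective_iff_bijective.mp ?_
    intro a b h
    simp only at h
    have : 2 * a = 2 * b := by linear_combination h
    exact mul_left_cancel₀ h2 this
  have hstep : ∀ t : ZMod p, (2 * t ^ 2 + 2 * t + 1)⁻¹ = 2 * ((2 * t + 1) ^ 2 + 1)⁻¹ := by
    intro t
    have h : (2 * t + 1) ^ 2 + 1 = 2 * (2 * t ^ 2 + 2 * t + 1) := by ring
    rw [h, mul_inv, ← mul_assoc, mul_inv_cancel₀ h2, one_mul]
  rw [Finset.sum_congr rfl (fun t _ => hstep t), ← Finset.mul_sum]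
  have := Fintype.sum_bijective (fun t : ZMod p => 2 * t + 1) he
    (fun t => ((2 * t + 1) ^ 2 + 1)⁻¹) (fun u => (u ^ 2 + 1)⁻¹) (fun t => rfl)
  rw [this, sum_inv_sq_add_one hp2 hp4, mul_inv_cancel₀ h2]

-- row sum over ALL of ZMod p
lemma sum_inv_row (hp2 : 2 < p) (hp4 : p % 4 = 3) {x : ZMod p} (hx : x ≠ 0) :
    ∑ y : ZMod p, (x ^ 2 + 2 * x * y + 2 * y ^ 2)⁻¹ = (x ^ 2)⁻¹ := by
  have he : Function.Bijective (fun t : ZMod p => x * t) := by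
    refine Finite.injective_iff_bijective.mp ?_
    intro a b h
    exact mul_left_cancel₀ hx h
  have := Fintype.sum_bijective (fun t : ZMod p => x * t) he
    (fun t => (x ^ 2 + 2 * x * (x * t) + 2 * (x * t) ^ 2)⁻¹)
    (fun y => (x ^ 2 + 2 * x * y + 2 * y ^ 2)⁻¹) (fun t => rfl)
  rw [← this]
  have hstep : ∀ t : ZMod p, (x ^ 2 + 2 * x * (x * t) + 2 * (x * t) ^ 2)⁻¹
      = (x ^ 2)⁻¹ * (2 * t ^ 2 + 2 * t + 1)⁻¹ := by
    intro t
    rw [← mul_inv]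
    congr 1
    ring
  rw [Finset.sum_congr rfl (fun t _ => hstep t), ← Finset.mul_sum, sum_inv_Q hp2 hp4, mul_one]

lemma sum_fin_eq_sum_erase (hp2 : 2 < p) (f : ZMod p → ZMod p) :
    ∑ j : Fin (p - 1), f (((j : ℕ) + 1 : ℕ) : ZMod p)
      = ∑ y ∈ Finset.univ.erase (0 : ZMod p), f y := by
  refine Finset.sum_nbij' (fun j => (((j : ℕ) + 1 : ℕ) : ZMod p))
    (fun y => ⟨y.val - 1, by
      have hv : y.val < p := ZMod.val_lt y
      omega⟩) ?_ ?_ ?_ ?_ ?_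
  · intro a _
    refine Finset.mem_erase.mpr ⟨?_, Finset.mem_univ _⟩
    rw [Ne, ZMod.natCast_eq_zero_iff]
    have := a.isLt
    intro h
    have := Nat.le_of_dvd (by omega) h
    omega
  · intro y _; exact Finset.mem_univ _
  · intro a _
    ext
    simp only
    have ha : (a : ℕ) + 1 < p := by have := a.isLt; omega
    rw [ZMod.val_natCast_of_lt ha]
    omega
  · intro y hy
    have hy0 : y ≠ 0 := (Finset.mem_erase.mp hy).1
    have hv : y.val < p := ZMod.val_lt y
    have hv0 : y.val ≠ 0 := fun h => hy0 (by rwa [← ZMod.val_eq_zero])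
    simp only
    rw [show y.val - 1 + 1 = y.val by omega, ZMod.natCast_val, ZMod.cast_id]
  · intro a _; rfl

lemma pow_sub_two_eq_inv (hp2 : 2 < p) {a : ZMod p} (h : a ≠ 0) : a ^ (p - 2) = a⁻¹ := by
  have h1 : a ^ (p - 1) = 1 := ZMod.pow_card_sub_one_eq_one h
  have hm : a ^ (p - 2) * a = 1 := by
    rw [← pow_succ, show p - 2 + 1 = p - 1 by omega]
    exact h1
  exact (inv_eq_of_mul_eq_one_left hm).symm

lemma cast_ne_zero (hp2 : 2 < p) (a : Fin (p - 1)) : (((a : ℕ) + 1 : ℕ) : ZMod p) ≠ 0 := by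
  rw [Ne, ZMod.natCast_eq_zero_iff]
  have := a.isLt
  intro h
  have := Nat.le_of_dvd (by omega) h
  omega

/-- For any prime `p > 3` with `p ≡ 3 (mod 4)`, `D_p(2, 2) ≡ 0 (mod p)`. -/
theorem stmt14 (p : ℕ) (hp : p.Prime) (hp3 : 3 < p) (hp4 : p % 4 = 3) :
    (p : ℤ) ∣ Dp p 2 2 := by
  haveI : Fact p.Prime := ⟨hp⟩
  have hp2 : 2 < p := by omega
  rw [← ZMod.intCast_zmod_eq_zero_iff_dvd]
  rw [Dp]
  have hdet := RingHom.map_det (Int.castRingHom (ZMod p))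
    (Matrix.of fun i j : Fin (p - 1) =>
      (((i : ℕ) + 1 : ℤ) ^ 2 + 2 * ((i : ℕ) + 1 : ℤ) * ((j : ℕ) + 1 : ℤ)
        + 2 * ((j : ℕ) + 1 : ℤ) ^ 2) ^ (p - 2))
  simp only [Int.coe_castRingHom, RingHom.mapMatrix_apply] at hdet
  rw [hdet]
  have hne : Nonempty (Fin (p - 1)) := ⟨⟨0, by omega⟩⟩
  rw [← Matrix.exists_mulVec_eq_zero_iff]
  refine ⟨fun _ => 1, ?_, ?_⟩
  · intro h
    have := congrFun h (Classical.choice hne)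
    simp at this
  · funext i
    simp only [Matrix.mulVec, dotProduct, mul_one, Pi.zero_apply,
      Matrix.map_apply, Matrix.of_apply]
    set x : ZMod p := (((i : ℕ) + 1 : ℕ) : ZMod p) with hx
    have hx0 : x ≠ 0 := cast_ne_zero hp2 i
    have hstep : ∀ j : Fin (p - 1),
        ((((((i : ℕ) + 1 : ℤ) ^ 2 + 2 * ((i : ℕ) + 1 : ℤ) * ((j : ℕ) + 1 : ℤ)
          + 2 * ((j : ℕ) + 1 : ℤ) ^ 2) ^ (p - 2) : ℤ)) : ZMod p)
        = (x ^ 2 + 2 * x * (((j : ℕ) + 1 : ℕ) : ZMod p)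
          + 2 * (((j : ℕ) + 1 : ℕ) : ZMod p) ^ 2)⁻¹ := by
      intro j
      set y : ZMod p := (((j : ℕ) + 1 : ℕ) : ZMod p) with hy
      have hy0 : y ≠ 0 := cast_ne_zero hp2 j
      have hnz : x ^ 2 + 2 * x * y + 2 * y ^ 2 ≠ 0 := by
        have := sq_add_sq_ne_zero hp4 hy0 (a := x + y)
        intro h
        exact this (by linear_combination h)
      rw [← pow_sub_two_eq_inv hp2 hnz]
      push_cast [hx, hy]
      ring
    rw [Finset.sum_congr rfl (fun j _ => hstep j)]
    rw [sum_fin_eq_sum_erase hp2 (fun y => (x ^ 2 + 2 * x * y + 2 * y ^ 2)⁻¹)]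
    rw [Finset.sum_erase_eq_sub (Finset.mem_univ (0 : ZMod p))]
    rw [sum_inv_row hp2 hp4 hx0]
    simp
end

section
/- Let $p>3$ be a prime and let $c,d$ be integers with $p\nmid d$. Then for every $j\in\{1,\dots,p-1\}$, $\left(1-2d(c^2-4d)^{(p-3)/2}\right)(dj^2)^{p-2}+\sum_{i=1}^{p-1}(i^2+cij+dj^2)^{p-2}\equiv 0\pmod p$. -/
open Finset

/-- Sum of `x^n` over all of a finite field, for positive exponent `n`. -/
lemma sum_pow_all (K : Type*) [Field K] [Fintype K] [DecidableEq K] (n : ℕ) (hn : n ≠ 0) :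
    ∑ x : K, x ^ n = if Fintype.card K - 1 ∣ n then -1 else 0 := by
  let φ : Kˣ ↪ K := ⟨fun x ↦ x, fun _ _ h => Units.ext h⟩
  have huniv : univ.map φ = univ \ {0} := by
    ext x
    simp only [mem_map, mem_univ, Function.Embedding.coeFn_mk, true_and, mem_sdiff,
      mem_singleton, φ]
    exact isUnit_iff_ne_zero
  calc
    ∑ x : K, x ^ n = ∑ x ∈ univ \ {(0 : K)}, x ^ n := by
      rw [← sum_sdiff ({0} : Finset K).subset_univ, sum_singleton, zero_pow hn, add_zero]
    _ = ∑ x : Kˣ, (x ^ n : K) := by simp [φ, ← huniv, univ.sum_map φ]; rfl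
    _ = _ := FiniteField.sum_pow_units K n

/-- `C(p-1, j) ≡ (-1)^j mod p`. -/
lemma choose_prime_sub_one (p : ℕ) (hp : p.Prime) :
    ∀ j : ℕ, j ≤ p - 1 → (((p - 1).choose j : ZMod p)) = (-1) ^ j := by
  intro j
  induction j with
  | zero => simp
  | succ k ih =>
    intro hk
    have h2 := hp.two_le
    have hpas : p.choose (k + 1) = (p - 1).choose k + (p - 1).choose (k + 1) := by
      have h := Nat.choose_succ_succ' (p - 1) k
      rwa [show p - 1 + 1 = p by omega] at h
    have hdvd : (p : ℤ) ∣ (p.choose (k + 1) : ℤ) := by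
      exact_mod_cast Int.natCast_dvd_natCast.mpr
        (Nat.Prime.dvd_choose_self hp (by omega) (by omega))
    have h0 : ((p.choose (k + 1) : ℤ) : ZMod p) = 0 := by
      rw [ZMod.intCast_zmod_eq_zero_iff_dvd]; exact hdvd
    push_cast at h0
    rw [hpas] at h0
    push_cast at h0
    rw [ih (by omega)] at h0
    have : ((p - 1).choose (k + 1) : ZMod p) = -(-1) ^ k := by linear_combination h0
    rw [this, pow_succ]
    ring

/-- `C(p-2, k) ≡ (-1)^k (k+1) mod p`. -/
lemma choose_prime_sub_two (p : ℕ) (hp : p.Prime) (hp2 : 2 < p) :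
    ∀ k : ℕ, k ≤ p - 2 → (((p - 2).choose k : ZMod p)) = (-1) ^ k * (k + 1) := by
  intro k
  induction k with
  | zero => simp
  | succ k ih =>
    intro hk
    have hpas : (p - 1).choose (k + 1) = (p - 2).choose k + (p - 2).choose (k + 1) := by
      have h := Nat.choose_succ_succ' (p - 2) k
      rwa [show p - 2 + 1 = p - 1 by omega] at h
    have h1 : (((p - 1).choose (k + 1) : ZMod p)) = (-1) ^ (k + 1) :=
      choose_prime_sub_one p hp (k + 1) (by omega)
    rw [hpas] at h1
    push_cast at h1
    rw [ih (by omega)] at h1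
    have : ((p - 2).choose (k + 1) : ZMod p) = (-1) ^ (k + 1) - (-1) ^ k * (k + 1) := by
      linear_combination h1
    rw [this, pow_succ]
    push_cast
    ring

lemma key_sum_s16 (m : ℕ) (hp : (2 * m + 3).Prime) (C D : ZMod (2 * m + 3)) :
    ∑ x : ZMod (2 * m + 3), (x ^ 2 + C * x + D) ^ (2 * m + 1)
      = 2 * (C ^ 2 - 4 * D) ^ m := by
  haveI : Fact (2 * m + 3).Prime := ⟨hp⟩
  have h2 : (2 : ZMod (2 * m + 3)) ≠ 0 := by
    have : ((2 : ℕ) : ZMod (2 * m + 3)) ≠ 0 := by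
      rw [Ne, ZMod.natCast_eq_zero_iff]
      intro h; have := Nat.le_of_dvd (by norm_num) h; omega
    exact_mod_cast this
  obtain ⟨t, ht2⟩ : ∃ t : ZMod (2 * m + 3), 2 * t = C :=
    ⟨C * 2⁻¹, by rw [mul_comm C, ← mul_assoc, mul_inv_cancel₀ h2, one_mul]⟩
  set b : ZMod (2 * m + 3) := D - t ^ 2 with hb_def
  have step1 : ∑ x : ZMod (2 * m + 3), (x ^ 2 + C * x + D) ^ (2 * m + 1)
      = ∑ y : ZMod (2 * m + 3), (y ^ 2 + b) ^ (2 * m + 1) := by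
    have hc : ∀ x : ZMod (2 * m + 3), x ^ 2 + C * x + D = (x + t) ^ 2 + b := by
      intro x; rw [hb_def]; linear_combination (-x) * ht2
    simp_rw [hc]
    exact Fintype.sum_equiv (Equiv.addRight t) _ _ (fun x => rfl)
  rw [step1]
  have step2 : ∀ y : ZMod (2 * m + 3), (y ^ 2 + b) ^ (2 * m + 1)
      = ∑ k ∈ range (2 * m + 2),
          y ^ (2 * k) * (b ^ (2 * m + 1 - k) * ((2 * m + 1).choose k : ZMod (2 * m + 3))) := by
    intro y
    rw [add_pow]
    exact Finset.sum_congr rfl fun k hk => by rw [← pow_mul, mul_assoc]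
  simp_rw [step2]
  rw [Finset.sum_comm]
  have hsump : ∀ k ∈ range (2 * m + 2),
      (∑ y : ZMod (2 * m + 3), y ^ (2 * k)) = if k = m + 1 then -1 else 0 := by
    intro k hk
    rcases Nat.eq_zero_or_pos k with rfl | hk0
    · simp only [mul_zero, pow_zero]
      rw [Finset.sum_const, Finset.card_univ, ZMod.card, nsmul_eq_mul, mul_one,
        ZMod.natCast_self, if_neg (by omega)]
    · rw [sum_pow_all _ (2 * k) (by omega), ZMod.card,
        show 2 * m + 3 - 1 = 2 * m + 2 by omega]
      simp only [mem_range] at hk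
      by_cases hkm : k = m + 1
      · rw [if_pos hkm, if_pos (by rw [hkm]; exact ⟨1, by ring⟩)]
      · rw [if_neg hkm, if_neg ?_]
        rintro ⟨q, hq⟩
        rcases q with _ | _ | q
        · omega
        · omega
        · nlinarith [hq, hk, hk0]
  calc ∑ k ∈ range (2 * m + 2), ∑ y : ZMod (2 * m + 3),
          y ^ (2 * k) * (b ^ (2 * m + 1 - k) * ((2 * m + 1).choose k : ZMod (2 * m + 3)))
      = ∑ k ∈ range (2 * m + 2), (if k = m + 1 then (-1 : ZMod (2 * m + 3)) else 0) *
          (b ^ (2 * m + 1 - k) * ((2 * m + 1).choose k : ZMod (2 * m + 3))) := by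
        refine Finset.sum_congr rfl fun k hk => ?_
        rw [← Finset.sum_mul, hsump k hk]
    _ = - (b ^ m * ((2 * m + 1).choose (m + 1) : ZMod (2 * m + 3))) := by
        simp only [ite_mul, zero_mul, neg_mul, one_mul]
        rw [Finset.sum_ite_eq' (range (2 * m + 2)) (m + 1)
          (fun k => -(b ^ (2 * m + 1 - k) * ((2 * m + 1).choose k : ZMod (2 * m + 3)))),
          if_pos (by simp only [mem_range]; omega), show 2 * m + 1 - (m + 1) = m by omega]
    _ = 2 * (C ^ 2 - 4 * D) ^ m := by
        have hch := choose_prime_sub_two (2 * m + 3) hp (by omega) (m + 1) (by omega)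
        rw [show 2 * m + 3 - 2 = 2 * m + 1 by omega] at hch
        push_cast at hch
        rw [hch]
        have hΔ : C ^ 2 - 4 * D = (-4) * b := by
          rw [hb_def]; linear_combination (-(2 * t + C)) * ht2
        rw [hΔ, show ((-4 : ZMod (2 * m + 3))) = (-1) * 4 by norm_num, mul_pow, mul_pow]
        have e1 : (2 : ZMod (2 * m + 3)) * ((m : ZMod (2 * m + 3)) + 2) = 1 := by
          have h0 : ((2 * m + 3 : ℕ) : ZMod (2 * m + 3)) = 0 := ZMod.natCast_self _
          push_cast at h0
          linear_combination h0
        have e2 : (2 : ZMod (2 * m + 3)) * (2 * (4 : ZMod (2 * m + 3)) ^ m) = 1 := by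
          have hf : (2 : ZMod (2 * m + 3)) ^ (2 * m + 3 - 1) = 1 :=
            ZMod.pow_card_sub_one_eq_one h2
          rw [show 2 * m + 3 - 1 = 2 * m + 2 by omega] at hf
          calc (2 : ZMod (2 * m + 3)) * (2 * (4 : ZMod (2 * m + 3)) ^ m)
              = 2 ^ (2 * m + 2) := by
                rw [show (4 : ZMod (2 * m + 3)) = 2 ^ 2 by norm_num, ← pow_mul]; ring
            _ = 1 := hf
        have em : ((m : ZMod (2 * m + 3)) + 2) = 2 * (4 : ZMod (2 * m + 3)) ^ m :=
          mul_left_cancel₀ h2 (e1.trans e2.symm)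
        have hm12 : ((m : ZMod (2 * m + 3)) + 1 + 1) = (m : ZMod (2 * m + 3)) + 2 := by ring
        rw [hm12, em, pow_succ]
        ring

lemma zmod_sum_range {n : ℕ} [NeZero n] {M : Type*} [AddCommMonoid M] (f : ZMod n → M) :
    ∑ i ∈ Finset.range n, f (i : ZMod n) = ∑ x : ZMod n, f x := by
  refine Finset.sum_bij' (fun i _ => ((i : ZMod n)))
    (fun x _ => x.val)
    (fun a _ => Finset.mem_univ _)
    (fun x _ => Finset.mem_range.mpr (ZMod.val_lt x))
    (fun a ha => ZMod.val_cast_of_lt (Finset.mem_range.mp ha))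
    (fun x _ => ZMod.natCast_rightInverse x)
    (fun a _ => rfl)

/-- Let `p > 3` be a prime and `c, d` integers with `p ∤ d`. Then for every
`j ∈ {1, …, p-1}`,
`(1 - 2d(c² - 4d)^((p-3)/2))·(d·j²)^(p-2) + ∑_{i=1}^{p-1} (i² + c·i·j + d·j²)^(p-2) ≡ 0 (mod p)`. -/
theorem stmt16 (p : ℕ) (hp : p.Prime) (hp3 : 3 < p) (c d : ℤ)
    (hd : ¬ (p : ℤ) ∣ d) :
    ∀ j : ℕ, 1 ≤ j → j ≤ p - 1 →
      (1 - 2 * d * (c ^ 2 - 4 * d) ^ ((p - 3) / 2)) * (d * (j : ℤ) ^ 2) ^ (p - 2) +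
        ∑ i ∈ Finset.Icc 1 (p - 1),
          ((i : ℤ) ^ 2 + c * (i : ℤ) * (j : ℤ) + d * (j : ℤ) ^ 2) ^ (p - 2)
        ≡ 0 [ZMOD p] := by
  intro j hj1 hj2
  haveI : Fact p.Prime := ⟨hp⟩
  obtain ⟨m, rfl⟩ : ∃ m, p = 2 * m + 3 := by
    rcases hp.odd_of_ne_two (by omega) with ⟨t, ht⟩
    exact ⟨t - 1, by omega⟩
  rw [Int.modEq_zero_iff_dvd, ← ZMod.intCast_zmod_eq_zero_iff_dvd]
  rw [show 2 * m + 3 - 2 = 2 * m + 1 by omega, show (2 * m + 3 - 3) / 2 = m by omega,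
    show 2 * m + 3 - 1 = 2 * m + 2 by omega] at *
  push_cast
  set K := ZMod (2 * m + 3) with hK
  set cK : K := (c : K) with hcK
  set dK : K := (d : K) with hdK
  set J : K := (j : K) with hJdef
  have hDK : dK ≠ 0 := by
    rw [hdK, Ne, ZMod.intCast_zmod_eq_zero_iff_dvd]
    exact_mod_cast hd
  have hJ : J ≠ 0 := by
    rw [hJdef, Ne, ZMod.natCast_eq_zero_iff]
    intro h
    have := Nat.le_of_dvd (by omega) h
    omega
  have hIcc : ∑ i ∈ Finset.Icc 1 (2 * m + 2),
        ((i : K) ^ 2 + cK * (i : K) * J + dK * J ^ 2) ^ (2 * m + 1)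
      = (∑ x : K, (x ^ 2 + (cK * J) * x + dK * J ^ 2) ^ (2 * m + 1))
        - (dK * J ^ 2) ^ (2 * m + 1) := by
    have hins : Finset.range (2 * m + 3) = insert 0 (Finset.Icc 1 (2 * m + 2)) := by
      ext x
      simp only [Finset.mem_range, Finset.mem_insert, Finset.mem_Icc]
      omega
    rw [← zmod_sum_range (fun x : K => (x ^ 2 + (cK * J) * x + dK * J ^ 2) ^ (2 * m + 1)),
      hins, Finset.sum_insert (by simp)]
    have h0 : (((0 : ℕ) : K) ^ 2 + (cK * J) * ((0 : ℕ) : K) + dK * J ^ 2) ^ (2 * m + 1)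
        = (dK * J ^ 2) ^ (2 * m + 1) := by norm_num
    rw [h0]
    have : ∀ i ∈ Finset.Icc 1 (2 * m + 2),
        ((i : K) ^ 2 + cK * (i : K) * J + dK * J ^ 2) ^ (2 * m + 1)
          = (((i : ℕ) : K) ^ 2 + (cK * J) * ((i : ℕ) : K) + dK * J ^ 2) ^ (2 * m + 1) := by
      intro i _
      congr 1
      ring
    rw [Finset.sum_congr rfl this]
    ring
  rw [hIcc, key_sum_s16 m hp (cK * J) (dK * J ^ 2)]
  have hne : dK * J ^ 2 ≠ 0 := mul_ne_zero hDK (pow_ne_zero _ hJ)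
  have hX : (dK * J ^ 2) ^ (2 * m + 1) = (dK * J ^ 2)⁻¹ := by
    refine eq_inv_of_mul_eq_one_left ?_
    rw [← pow_succ, show 2 * m + 1 + 1 = 2 * m + 3 - 1 by omega,
      ZMod.pow_card_sub_one_eq_one hne]
  have hΔ : (cK * J) ^ 2 - 4 * (dK * J ^ 2) = (cK ^ 2 - 4 * dK) * J ^ 2 := by ring
  rw [hX, hΔ, mul_pow]
  have hY : ((J : K) ^ 2) ^ m = (J ^ 2)⁻¹ := by
    refine eq_inv_of_mul_eq_one_left ?_
    rw [← pow_succ, ← pow_mul, show 2 * (m + 1) = 2 * m + 3 - 1 by omega,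
      ZMod.pow_card_sub_one_eq_one hJ]
  rw [hY]
  field_simp
  ring
end

section
/- Let $p$ be a prime greater than $3$ and let $c,d$ be integers with $p\nmid d(c^2-4d)$. If $c^2-4d\equiv 2d\left(\frac{c^2-4d}{p}\right)\pmod p$, where $\left(\frac{c^2-4d}{p}\right)$ is the Legendre symbol, then $D_p(c,d)\equiv 0\pmod p$. -/
open Finset

section Aux

variable {p : ℕ} [Fact p.Prime]

private lemma sumA' {n : ℕ} (h : n < p - 1) : ∑ v : ZMod p, v ^ n = 0 :=
  FiniteField.sum_pow_lt_card_sub_one (ZMod p) n (by rwa [ZMod.card])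

private lemma sumB' : ∑ v : ZMod p, v ^ (p - 1) = -1 := by
  have h2 : 2 ≤ p := (Fact.out : p.Prime).two_le
  have h0 : (0 : ZMod p) ^ (p - 1) = 0 := by apply zero_pow; omega
  have : ∑ v : ZMod p, v ^ (p - 1)
      = ∑ v ∈ (univ.erase (0 : ZMod p)), v ^ (p - 1) + (0:ZMod p) ^ (p-1) := by
    rw [Finset.sum_erase_add _ _ (mem_univ 0)]
  rw [this, h0, add_zero, Finset.sum_congr rfl
    (fun v hv => ZMod.pow_card_sub_one_eq_one (Finset.ne_of_mem_erase hv)),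
    Finset.sum_const, Finset.card_erase_of_mem (mem_univ 0), Finset.card_univ, ZMod.card,
    nsmul_eq_mul, mul_one]
  push_cast [Nat.cast_sub (by omega : 1 ≤ p)]
  simp [ZMod.natCast_self]

private lemma sumC' {n : ℕ} (h0 : 0 < n) :
    ∑ v : ZMod p, v ^ (n + (p-1)) = ∑ v : ZMod p, v ^ n := by
  have h2 : 2 ≤ p := (Fact.out : p.Prime).two_le
  apply Finset.sum_congr rfl
  intro v _
  by_cases hv : v = 0
  · subst hv; rw [zero_pow (by omega), zero_pow (by omega)]
  · rw [pow_add, ZMod.pow_card_sub_one_eq_one hv, mul_one]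

private lemma sumSq' (hp2 : 2 < p) {k : ℕ} (hk : k ≤ p - 2) :
    ∑ v : ZMod p, (v ^ 2) ^ k = (if k = p / 2 then -1 else 0 : ZMod p) := by
  have hodd : p % 2 = 1 := Nat.odd_iff.mp ((Fact.out : p.Prime).odd_of_ne_two (by omega))
  have hq : 2 * (p / 2) = p - 1 := by omega
  simp only [← pow_mul]
  rcases lt_trichotomy k (p / 2) with hlt | rfl | hgt
  · rw [if_neg (by omega), sumA' (by omega)]
  · rw [if_pos rfl, hq, sumB']
  · rw [if_neg (by omega)]
    have hrepr : 2 * k = (2 * k - (p - 1)) + (p - 1) := by omega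
    rw [hrepr, sumC' (by omega), sumA' (by omega)]

private lemma chooseA' {m : ℕ} (hm : m ≤ p - 1) : ((p-1).choose m : ZMod p) = (-1)^m := by
  have h2 : 2 ≤ p := (Fact.out : p.Prime).two_le
  induction m with
  | zero => simp
  | succ n ih =>
    have hps : p - 1 + 1 = p := by omega
    have hpascal : p.choose (n+1) = (p-1).choose n + (p-1).choose (n+1) := by
      conv_lhs => rw [← hps]
      rw [Nat.choose_succ_succ]
    have hdvd : p ∣ p.choose (n+1) :=
      Nat.Prime.dvd_choose_self (Fact.out : p.Prime) (Nat.succ_ne_zero n) (by omega)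
    have h0 : ((p.choose (n+1) : ℕ) : ZMod p) = 0 :=
      (ZMod.natCast_eq_zero_iff _ _).mpr hdvd
    rw [hpascal] at h0
    push_cast at h0
    rw [ih (by omega)] at h0
    rw [show ((-1 : ZMod p))^(n+1) = -(-1)^n by ring]
    linear_combination h0

private lemma chooseB' {m : ℕ} (hm : m ≤ p - 2) :
    ((p-2).choose m : ZMod p) = (-1)^m * (m+1) := by
  have h2 : 2 ≤ p := (Fact.out : p.Prime).two_le
  induction m with
  | zero => simp
  | succ n ih =>
    have hps : p - 2 + 1 = p - 1 := by omega
    have hpascal : (p-1).choose (n+1) = (p-2).choose n + (p-2).choose (n+1) := by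
      conv_lhs => rw [← hps]
      rw [Nat.choose_succ_succ]
    have h0 : (((p-1).choose (n+1) : ℕ) : ZMod p) = (-1)^(n+1) := chooseA' (by omega)
    rw [hpascal] at h0
    push_cast at h0
    rw [ih (by omega)] at h0
    push_cast
    linear_combination h0

private lemma keyLemma (hp3 : 3 < p) (C D : ZMod p) (hD : D ≠ 0)
    (hDel : C^2 - 4*D ≠ 0) (h : C^2 - 4*D = 2*D*(C^2-4*D)^(p/2)) :
    ∑ u : ZMod p, (1 + C*u + D*u^2)^(p-2) = 1 := by
  have hp := (Fact.out : p.Prime)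
  have hodd : p % 2 = 1 := Nat.odd_iff.mp (hp.odd_of_ne_two (by omega))
  have h2 : (2 : ZMod p) ≠ 0 := by
    have : ¬ (p ∣ 2) := by intro hdvd; have := Nat.le_of_dvd (by norm_num) hdvd; omega
    intro hc
    exact this ((ZMod.natCast_eq_zero_iff 2 p).mp (by push_cast; exact hc))
  have h4 : (4 : ZMod p) ≠ 0 := by
    have : (4 : ZMod p) = 2 * 2 := by norm_num
    rw [this]; exact mul_ne_zero h2 h2
  have h4D : (4 : ZMod p) * D ≠ 0 := mul_ne_zero h4 hD
  have h2D : (2 : ZMod p) * D ≠ 0 := mul_ne_zero h2 hD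
  obtain ⟨t, ht⟩ : ∃ t : ZMod p, t = C * (2*D)⁻¹ := ⟨_, rfl⟩
  obtain ⟨a, ha⟩ : ∃ a : ZMod p, a = -(C^2 - 4*D) * (4*D)⁻¹ := ⟨_, rfl⟩
  have hpt : ∀ u : ZMod p, 1 + C*u + D*u^2 = D*(u+t)^2 + a := by
    intro u
    rw [ht, ha]
    field_simp
    ring
  have step1 : ∑ u : ZMod p, (1 + C*u + D*u^2)^(p-2)
      = ∑ v : ZMod p, (D*v^2 + a)^(p-2) := by
    apply Fintype.sum_equiv (Equiv.addRight t)
    intro u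
    rw [hpt u]
    rfl
  rw [step1]
  have hexp : ∀ v : ZMod p, (D*v^2 + a)^(p-2)
      = ∑ k ∈ range (p-1), (v^2)^k * (D^k * (a^(p-2-k) * ((p-2).choose k : ZMod p))) := by
    intro v
    rw [add_pow, show p - 2 + 1 = p - 1 from by omega]
    exact Finset.sum_congr rfl (fun k _ => by rw [mul_pow]; ring)
  rw [Finset.sum_congr rfl (fun v _ => hexp v), Finset.sum_comm]
  have hpull : ∀ k ∈ range (p-1),
      ∑ v : ZMod p, (v^2)^k * (D^k * (a^(p-2-k) * ((p-2).choose k : ZMod p)))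
      = (if k = p/2 then (-1 : ZMod p) else 0)
          * (D^k * (a^(p-2-k) * ((p-2).choose k : ZMod p))) := by
    intro k hk
    rw [← Finset.sum_mul, sumSq' (by omega) (by simp at hk; omega)]
  rw [Finset.sum_congr rfl hpull]
  rw [Finset.sum_eq_single_of_mem (p/2) (by simp; omega)
    (fun b _ hb => by rw [if_neg hb, zero_mul])]
  rw [if_pos rfl, show p - 2 - p/2 = p/2 - 1 from by omega,
    chooseB' (by omega : p/2 ≤ p - 2)]
  obtain ⟨r, hr⟩ : ∃ r, p/2 = r + 1 := ⟨p/2 - 1, by omega⟩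
  rw [hr] at h ⊢
  rw [show r + 1 - 1 = r from rfl]
  have key2 : (2 : ZMod p) * D * (C^2-4*D)^r = 1 := by
    apply mul_right_cancel₀ hDel
    rw [one_mul]
    linear_combination -h
  have hcc : (2 : ZMod p) * (((r+1 : ℕ) : ZMod p) + 1) = 1 := by
    have hcast : ((2*(r+1)+1 : ℕ) : ZMod p) = ((p : ℕ) : ZMod p) := by
      congr 1; omega
    rw [ZMod.natCast_self] at hcast
    push_cast at hcast ⊢
    linear_combination hcast
  have hfa : (4*D) * a = -(C^2-4*D) := by
    rw [ha]; field_simp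
  have h4r : (4 : ZMod p) * 4^r = 1 := by
    have h41 : (4:ZMod p)^(r+1) = 1 := by
      have h2p : (2:ZMod p)^(p-1) = 1 := ZMod.pow_card_sub_one_eq_one h2
      calc (4:ZMod p)^(r+1) = (2^2)^(r+1) := by norm_num
        _ = 2^(2*(r+1)) := by rw [← pow_mul]
        _ = 2^(p-1) := by congr 1; omega
        _ = 1 := h2p
    calc (4:ZMod p)*4^r = 4^(r+1) := by rw [pow_succ]; ring
      _ = 1 := h41
  have hsign : ((-1:ZMod p))^r * (-1) * (-1)^(r+1) = 1 := by
    have h1 : ((-1:ZMod p))^(r + (r+1) + 1) = 1 := by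
      rw [show r+(r+1)+1 = 2*(r+1) from by ring, pow_mul]; norm_num
    rw [pow_add, pow_add, pow_one] at h1
    linear_combination h1
  have h8 : ((4*D)^r * 8 : ZMod p) ≠ 0 := by
    apply mul_ne_zero (pow_ne_zero _ h4D)
    rw [show (8:ZMod p) = 2^3 from by norm_num]
    exact pow_ne_zero _ h2
  apply mul_left_cancel₀ h8
  have lhs_eq : (4*D)^r * 8 * (-1 * (D^(r+1) * (a^r * ((-1)^(r+1) * (((r+1:ℕ):ZMod p)+1)))))
      = 2*D^r := by
    calc (4*D)^r * 8 * (-1 * (D^(r+1) * (a^r * ((-1)^(r+1) * (((r+1:ℕ):ZMod p)+1)))))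
        = ((4*D)*a)^r * ((-1)*(-1)^(r+1)) * ((2:ZMod p)*(((r+1:ℕ):ZMod p)+1)) * (4 * D^(r+1)) := by
          rw [mul_pow]; ring
      _ = (-(C^2-4*D))^r * ((-1)*(-1)^(r+1)) * 1 * (4*D^(r+1)) := by rw [hfa, hcc]
      _ = (C^2-4*D)^r * ((-1)^r * (-1) * (-1)^(r+1)) * (4*D^(r+1)) := by rw [neg_pow]; ring
      _ = (C^2-4*D)^r * (4*D^(r+1)) := by rw [hsign]; ring
      _ = 2*D^r * (2*D*(C^2-4*D)^r) := by ring
      _ = 2*D^r := by rw [key2, mul_one]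
  have rhs_eq : ((4*D)^r * 8 : ZMod p) * 1 = 2*D^r := by
    calc ((4*D)^r * 8 : ZMod p) * 1 = 2*D^r * (4*4^r) := by rw [mul_pow]; ring
      _ = 2*D^r := by rw [h4r, mul_one]
  rw [rhs_eq]
  exact lhs_eq

private lemma rowsum (hp3 : 3 < p) (C D : ZMod p) (A : ZMod p) (hA : A ≠ 0)
    (hkey : ∑ u : ZMod p, (1 + C*u + D*u^2)^(p-2) = 1) :
    ∑ j : Fin (p-1), (A^2 + C*A*(((j:ℕ)+1 : ℕ) : ZMod p)
      + D*((((j:ℕ)+1 : ℕ) : ZMod p))^2)^(p-2) = 0 := by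
  have hp := (Fact.out : p.Prime)
  set F : ZMod p → ZMod p := fun x => (A^2 + C*A*x + D*x^2)^(p-2) with hF
  have h1 : ∑ j : Fin (p-1), F ((((j:ℕ)+1 : ℕ) : ZMod p))
      = ∑ x ∈ (univ.erase (0 : ZMod p)), F x := by
    apply Finset.sum_nbij' (fun j : Fin (p-1) => (((j:ℕ)+1 : ℕ) : ZMod p))
      (fun x : ZMod p => (⟨x.val - 1, by have := ZMod.val_lt x; omega⟩ : Fin (p-1)))
    · intro j _
      apply Finset.mem_erase.mpr
      refine ⟨?_, mem_univ _⟩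
      intro hc
      have : ((((j:ℕ)+1 : ℕ) : ZMod p)).val = (j:ℕ)+1 := ZMod.val_cast_of_lt (by omega)
      rw [hc] at this
      simp [ZMod.val_zero] at this
    · intro x _; exact mem_univ _
    · intro j _
      have hv : ((((j:ℕ)+1 : ℕ) : ZMod p)).val = (j:ℕ)+1 := ZMod.val_cast_of_lt (by omega)
      apply Fin.ext
      push_cast at hv ⊢
      omega
    · intro x hx
      have hx0 : x ≠ 0 := (Finset.mem_erase.mp hx).1
      have hv : x.val ≠ 0 := fun hc => hx0 (by rwa [← ZMod.val_eq_zero])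
      simp only []
      have : x.val - 1 + 1 = x.val := by omega
      rw [this]
      rw [ZMod.natCast_val, ZMod.cast_id]
    · intro j _; rfl
  have h2 : ∑ x ∈ (univ.erase (0 : ZMod p)), F x = (∑ x : ZMod p, F x) - F 0 :=
    eq_sub_of_add_eq (Finset.sum_erase_add univ F (mem_univ 0))
  have h3 : ∑ x : ZMod p, F x = A^(2*(p-2)) * ∑ u : ZMod p, (1+C*u+D*u^2)^(p-2) := by
    rw [Finset.mul_sum]
    refine (Fintype.sum_equiv (Equiv.mulLeft₀ A hA) _ _ ?_).symm
    intro u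
    show A ^ (2*(p-2)) * (1 + C*u + D*u^2)^(p-2) = F (A * u)
    rw [hF]
    simp only []
    rw [pow_mul, ← mul_pow]
    congr 1
    ring
  have h4 : F 0 = A^(2*(p-2)) := by
    rw [hF]; simp only []
    rw [pow_mul]
    congr 1
    ring
  show ∑ j : Fin (p-1), F ((((j:ℕ)+1 : ℕ) : ZMod p)) = 0
  rw [h1, h2, h3, hkey, h4, mul_one, sub_self]

end Aux

/-- Let `p > 3` be a prime and `c, d` integers with `p ∤ d(c² - 4d)`. If
`c² - 4d ≡ 2d·((c²-4d)/p) (mod p)`, where `(·/p)` is the Legendre symbol, then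
`D_p(c, d) ≡ 0 (mod p)`. -/
theorem stmt17 (p : ℕ) [Fact p.Prime] (hp3 : 3 < p) (c d : ℤ)
    (hd : ¬ (p : ℤ) ∣ d * (c ^ 2 - 4 * d))
    (h : c ^ 2 - 4 * d ≡ 2 * d * legendreSym p (c ^ 2 - 4 * d) [ZMOD p]) :
    (p : ℤ) ∣ Dp p c d := by
  have hp := (Fact.out : p.Prime)
  rw [← ZMod.intCast_zmod_eq_zero_iff_dvd]
  have hD : (d : ZMod p) ≠ 0 := by
    intro hc
    exact hd (Dvd.dvd.mul_right ((ZMod.intCast_zmod_eq_zero_iff_dvd d p).mp hc) _)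
  have hDel : (c : ZMod p)^2 - 4*(d : ZMod p) ≠ 0 := by
    intro hc
    apply hd
    apply Dvd.dvd.mul_left _ d
    apply (ZMod.intCast_zmod_eq_zero_iff_dvd _ p).mp
    push_cast
    exact hc
  have hkeyh : (c : ZMod p)^2 - 4*(d : ZMod p)
      = 2*(d : ZMod p)*((c : ZMod p)^2 - 4*(d : ZMod p))^(p/2) := by
    have h1 := (ZMod.intCast_eq_intCast_iff _ _ _).mpr h
    push_cast at h1
    rw [legendreSym.eq_pow] at h1
    push_cast at h1
    exact h1
  have hkey := keyLemma hp3 (c : ZMod p) (d : ZMod p) hD hDel hkeyh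
  have hdet : ((Dp p c d : ℤ) : ZMod p) = (Matrix.of fun i j : Fin (p-1) =>
      (((((i:ℕ)+1 : ℕ) : ZMod p))^2
        + (c : ZMod p)*((((i:ℕ)+1 : ℕ) : ZMod p))*((((j:ℕ)+1 : ℕ) : ZMod p))
        + (d : ZMod p)*((((j:ℕ)+1 : ℕ) : ZMod p))^2)^(p-2)).det := by
    unfold Dp
    refine (RingHom.map_det (Int.castRingHom (ZMod p)) _).trans ?_
    congr 1
    ext i j
    simp only [RingHom.mapMatrix_apply, Matrix.map_apply, Matrix.of_apply, map_pow, eq_intCast]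
    push_cast
    ring
  rw [hdet]
  rw [← Matrix.exists_mulVec_eq_zero_iff]
  refine ⟨fun _ => 1, ?_, ?_⟩
  · intro hc
    have h01 : (1 : ZMod p) = 0 := congrFun hc ⟨0, by omega⟩
    simp at h01
  · funext i
    have hA : ((((i:ℕ)+1 : ℕ)) : ZMod p) ≠ 0 := by
      intro hc
      have : ((((i:ℕ)+1 : ℕ) : ZMod p)).val = (i:ℕ)+1 :=
        ZMod.val_cast_of_lt (by have := i.isLt; omega)
      rw [hc] at this
      simp [ZMod.val_zero] at this
    have hrow := rowsum hp3 (c : ZMod p) (d : ZMod p) _ hA hkey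
    simp only [Matrix.mulVec, dotProduct, mul_one, Matrix.of_apply, Pi.zero_apply]
    exact hrow
end
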